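/- arXiv:math/0204172 — 6 statements merged into one kernel-verified Lean document; each statement's English description precedes it below -/
import Mathlib

section
/- Let d ≥ 2 and let m be a lower-triangular family of integers m_{i,j} (1 ≤ j ≤ i ≤ d-1). For ε = (ε_1,…,ε_{d-1}) ∈ {0,1}^{d-1} define recursively v_k(ε) := ε_{k-1}·(m_{k-1,1} + Σ_{l=2}^{k-1} m_{k-1,l}·v_l(ε)) for k = 2,…,d. For n ∈ {2,…,d} and k ∈ {0,…,n-2} set q_{k,n}(ε) := Σ over chains 0 = i_0 < i_1 < ⋯ < i_k < i_{k+1} = n-1 of ∏_{j=1}^{k+1} ε_{i_j}·m_{i_j, i_{j-1}+1}. Then for every n ∈ {2,…,d}, v_n(ε) = Σ_{k=0}^{n-2} q_{k,n}(ε). -/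
/-- Sum over chains `0 = i₀ < i₁ < ⋯ < i_k < i_{k+1} = n-1` of
`∏_{j=1}^{k+1} ε_{i_j} · m_{i_j, i_{j-1}+1}`. -/
def qSum (m : ℕ → ℕ → ℤ) (ε : ℕ → ℤ) (k n : ℕ) : ℤ :=
  ∑ c ∈ Finset.univ.filter
      (fun c : Fin (k + 2) → Fin n =>
        StrictMono c ∧ (c 0 : ℕ) = 0 ∧ (c (Fin.last (k + 1)) : ℕ) = n - 1),
    ∏ j : Fin (k + 1),
      ε (c j.succ : ℕ) * m (c j.succ : ℕ) ((c j.castSucc : ℕ) + 1)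

namespace QAux

variable (m : ℕ → ℕ → ℤ) (ε : ℕ → ℤ)

lemma qSum_zero {k n : ℕ} (h : n < k + 2) : qSum m ε k n = 0 := by
  unfold qSum
  rw [Finset.sum_eq_zero]
  intro c hc
  simp only [Finset.mem_filter] at hc
  exfalso
  have : Fintype.card (Fin (k+2)) ≤ Fintype.card (Fin n) :=
    Fintype.card_le_of_injective c hc.2.1.injective
  simp at this
  omega

lemma qSum_base {n : ℕ} (hn : 2 ≤ n) : qSum m ε 0 n = ε (n-1) * m (n-1) 1 := by
  unfold qSum
  have hn1 : n - 1 < n := by omega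
  have h0 : (0 : ℕ) < n := by omega
  have hset : (Finset.univ.filter
      (fun c : Fin 2 → Fin n =>
        StrictMono c ∧ (c 0 : ℕ) = 0 ∧ (c (Fin.last 1) : ℕ) = n - 1)) =
      {![⟨0, h0⟩, ⟨n-1, hn1⟩]} := by
    ext c
    simp only [Finset.mem_filter, Finset.mem_univ, true_and, Finset.mem_singleton]
    constructor
    · rintro ⟨hm, h1, h2⟩
      funext j
      fin_cases j
      · exact Fin.ext h1
      · exact Fin.ext h2
    · rintro rfl
      refine ⟨?_, rfl, rfl⟩
      intro a b hab
      fin_cases a <;> fin_cases b <;> simp_all <;> omega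
  rw [hset, Finset.sum_singleton]
  simp

lemma key (k n l : ℕ) (hl2 : 2 ≤ l) (hln : l < n) :
    ∑ c ∈ (Finset.univ.filter
        (fun c : Fin (k+3) → Fin n =>
          StrictMono c ∧ (c 0 : ℕ) = 0 ∧ (c (Fin.last (k+2)) : ℕ) = n - 1)).filter
        (fun c => (c (Fin.last (k+1)).castSucc : ℕ) + 1 = l),
      ∏ j : Fin (k+1),
        ε (c j.castSucc.succ : ℕ) * m (c j.castSucc.succ : ℕ) ((c j.castSucc.castSucc : ℕ) + 1)
    = qSum m ε k l := by
  unfold qSum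
  have hll : l - 1 < l := by omega
  refine Finset.sum_nbij'
    (i := fun c (j : Fin (k+2)) => (⟨min (c j.castSucc : ℕ) (l-1), by omega⟩ : Fin l))
    (j := fun c' => fun i : Fin (k+3) =>
      if h : (i : ℕ) < k + 2 then (⟨(c' ⟨i, h⟩ : ℕ), lt_trans (c' ⟨i, h⟩).isLt hln⟩ : Fin n)
      else ⟨n - 1, by omega⟩)
    ?_ ?_ ?_ ?_ ?_
  · -- forward maps to
    intro c hc
    simp only [Finset.mem_filter, Finset.mem_univ, true_and] at hc ⊢
    obtain ⟨⟨hmono, h0, hlast⟩, hg⟩ := hc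
    have hle : ∀ j : Fin (k+2), (c j.castSucc : ℕ) ≤ l - 1 := by
      intro j
      have h1 : j.castSucc ≤ (Fin.last (k+1)).castSucc := by
        rw [Fin.le_def]; simp [Fin.le_last]; omega
      have := hmono.monotone h1
      rw [Fin.le_def] at this
      omega
    refine ⟨?_, ?_, ?_⟩
    · intro a b hab
      rw [Fin.lt_def]
      simp only [Nat.min_eq_left (hle a), Nat.min_eq_left (hle b)]
      exact hmono (by rwa [Fin.castSucc_lt_castSucc_iff])
    · have h00 : ((0 : Fin (k+2)).castSucc) = (0 : Fin (k+3)) := rfl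
      show min ((c (0 : Fin (k+2)).castSucc : ℕ)) (l-1) = 0
      rw [h00, h0]
      omega
    · show min ((c (Fin.last (k+1)).castSucc : ℕ)) (l-1) = l - 1
      omega
  · -- backward maps to
    intro c' hc'
    simp only [Finset.mem_filter, Finset.mem_univ, true_and] at hc' ⊢
    obtain ⟨hmono, h0, hlast⟩ := hc'
    refine ⟨⟨?_, ?_, ?_⟩, ?_⟩
    · intro a b hab
      rw [Fin.lt_def] at hab ⊢
      by_cases ha : (a : ℕ) < k + 2
      · by_cases hb : (b : ℕ) < k + 2
        · simp only [dif_pos ha, dif_pos hb]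
          have : (⟨(a:ℕ), ha⟩ : Fin (k+2)) < ⟨(b:ℕ), hb⟩ := by rw [Fin.lt_def]; exact hab
          have := hmono this
          rw [Fin.lt_def] at this
          exact this
        · simp only [dif_pos ha, dif_neg hb]
          have := (c' ⟨(a:ℕ), ha⟩).isLt
          omega
      · have hb : ¬ (b : ℕ) < k + 2 := by omega
        omega
    · beta_reduce
      rw [dif_pos (by simp : (((0 : Fin (k+3))) : ℕ) < k+2)]
      have : (⟨(((0 : Fin (k+3))) : ℕ), by simp⟩ : Fin (k+2)) = 0 := by apply Fin.ext; rfl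
      rw [this]
      show (c' (0 : Fin (k+2)) : ℕ) = 0
      exact h0
    · beta_reduce
      rw [dif_neg (by simp [Fin.last])]
    · beta_reduce
      rw [dif_pos (by simp [Fin.last, Fin.castSucc_mk] : (((Fin.last (k+1)).castSucc : Fin (k+3)) : ℕ) < k+2)]
      have he : (⟨(((Fin.last (k+1)).castSucc : Fin (k+3)) : ℕ), by simp⟩ : Fin (k+2)) = Fin.last (k+1) := by
        apply Fin.ext; simp [Fin.last]
      rw [he]
      show (c' (Fin.last (k+1)) : ℕ) + 1 = l
      omega
  · -- left inverse
    intro c hc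
    simp only [Finset.mem_filter, Finset.mem_univ, true_and] at hc
    obtain ⟨⟨hmono, h0, hlast⟩, hg⟩ := hc
    have hle : ∀ j : Fin (k+2), (c j.castSucc : ℕ) ≤ l - 1 := by
      intro j
      have h1 : j.castSucc ≤ (Fin.last (k+1)).castSucc := by
        rw [Fin.le_def]; simp [Fin.le_last]; omega
      have := hmono.monotone h1
      rw [Fin.le_def] at this
      omega
    funext i₀
    apply Fin.ext
    by_cases h : (i₀ : ℕ) < k + 2
    · beta_reduce
      rw [dif_pos h]
      have hcast : ((⟨(i₀:ℕ), h⟩ : Fin (k+2)).castSucc) = i₀ := by apply Fin.ext; rfl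
      show min ((c (⟨(i₀:ℕ), h⟩ : Fin (k+2)).castSucc : ℕ)) (l-1) = _
      have := hle ⟨(i₀:ℕ), h⟩
      rw [hcast] at this ⊢
      omega
    · beta_reduce
      rw [dif_neg h]
      have : i₀ = Fin.last (k+2) := by apply Fin.ext; simp [Fin.last]; omega
      rw [this, hlast]
  · -- right inverse
    intro c' hc'
    funext j₀
    apply Fin.ext
    beta_reduce
    show min ((if h : ((j₀.castSucc : Fin (k+3)) : ℕ) < k+2 then
        ((⟨(c' ⟨((j₀.castSucc : Fin (k+3)) : ℕ), h⟩ : ℕ), lt_trans (c' _).isLt hln⟩ : Fin n)) else ⟨n-1, by omega⟩ : Fin n) : ℕ) (l-1) = _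
    rw [dif_pos (by have := j₀.isLt; exact (by simpa using this : ((j₀.castSucc : Fin (k+3)) : ℕ) < k+2))]
    have he : (⟨((j₀.castSucc : Fin (k+3)) : ℕ), by simpa using j₀.isLt⟩ : Fin (k+2)) = j₀ := by apply Fin.ext; rfl
    rw [he]
    show min ((c' j₀ : ℕ)) (l-1) = (c' j₀ : ℕ)
    have := (c' j₀).isLt
    omega
  · -- values
    intro c hc
    simp only [Finset.mem_filter, Finset.mem_univ, true_and] at hc
    obtain ⟨⟨hmono, h0, hlast⟩, hg⟩ := hc
    have hle : ∀ j : Fin (k+2), (c j.castSucc : ℕ) ≤ l - 1 := by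
      intro j
      have h1 : j.castSucc ≤ (Fin.last (k+1)).castSucc := by
        rw [Fin.le_def]; simp [Fin.le_last]; omega
      have := hmono.monotone h1
      rw [Fin.le_def] at this
      omega
    refine Finset.prod_congr rfl fun j _ => ?_
    beta_reduce
    show _ = ε (min (c j.succ.castSucc : ℕ) (l-1)) *
        m (min (c j.succ.castSucc : ℕ) (l-1)) ((min (c j.castSucc.castSucc : ℕ) (l-1)) + 1)
    rw [min_eq_left (hle j.succ), min_eq_left (hle j.castSucc), Fin.succ_castSucc]

lemma qSum_rec {n : ℕ} (k : ℕ) (hn : 2 ≤ n) :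
    qSum m ε (k+1) n = ε (n-1) * ∑ l ∈ Finset.Ico 2 n, m (n-1) l * qSum m ε k l := by
  have hL : qSum m ε (k+1) n = ∑ c ∈ Finset.univ.filter
      (fun c : Fin (k+3) → Fin n =>
        StrictMono c ∧ (c 0 : ℕ) = 0 ∧ (c (Fin.last (k+2)) : ℕ) = n - 1),
      ∏ j : Fin (k+2), ε (c j.succ : ℕ) * m (c j.succ : ℕ) ((c j.castSucc : ℕ) + 1) := rfl
  rw [hL]
  have hterm : ∀ c ∈ Finset.univ.filter
      (fun c : Fin (k+3) → Fin n =>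
        StrictMono c ∧ (c 0 : ℕ) = 0 ∧ (c (Fin.last (k+2)) : ℕ) = n - 1),
      (∏ j : Fin (k+2), ε (c j.succ : ℕ) * m (c j.succ : ℕ) ((c j.castSucc : ℕ) + 1))
      = ε (n-1) * (m (n-1) ((c (Fin.last (k+1)).castSucc : ℕ) + 1) *
          ∏ j : Fin (k+1), ε (c j.castSucc.succ : ℕ) *
            m (c j.castSucc.succ : ℕ) ((c j.castSucc.castSucc : ℕ) + 1)) := by
    intro c hc
    simp only [Finset.mem_filter, Finset.mem_univ, true_and] at hc
    obtain ⟨hmono, h0, hlast⟩ := hc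
    rw [Fin.prod_univ_castSucc]
    rw [Fin.succ_last]
    have h2 : (Fin.last (k+1+1)) = Fin.last (k+2) := rfl
    rw [h2, hlast]
    ring
  rw [Finset.sum_congr rfl hterm]
  have hmaps : ∀ c ∈ Finset.univ.filter
      (fun c : Fin (k+3) → Fin n =>
        StrictMono c ∧ (c 0 : ℕ) = 0 ∧ (c (Fin.last (k+2)) : ℕ) = n - 1),
      ((c (Fin.last (k+1)).castSucc : ℕ) + 1) ∈ Finset.Ico 2 n := by
    intro c hc
    simp only [Finset.mem_filter, Finset.mem_univ, true_and] at hc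
    obtain ⟨hmono, h0, hlast⟩ := hc
    have ha : (0 : Fin (k+3)) < (Fin.last (k+1)).castSucc := by
      rw [Fin.lt_def]; simp
    have hb : ((Fin.last (k+1)).castSucc : Fin (k+3)) < Fin.last (k+2) := by
      rw [Fin.lt_def]; simp [Fin.last]
    have h1 := hmono ha
    have h2 := hmono hb
    rw [Fin.lt_def] at h1 h2
    simp only [Finset.mem_Ico]
    clear hterm hL hmono
    omega
  rw [← Finset.sum_fiberwise_of_maps_to
    (g := fun c : Fin (k+3) → Fin n => ((c (Fin.last (k+1)).castSucc : ℕ) + 1)) hmaps]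
  rw [Finset.mul_sum]
  refine Finset.sum_congr rfl fun l hl => ?_
  simp only [Finset.mem_Ico] at hl
  rw [← key m ε k n l hl.1 hl.2]
  rw [Finset.mul_sum, Finset.mul_sum]
  refine Finset.sum_congr rfl fun c hc => ?_
  rw [(Finset.mem_filter.1 hc).2]

end QAux

theorem stmt0 (d : ℕ) (hd : 2 ≤ d) (m : ℕ → ℕ → ℤ) (ε : ℕ → ℤ)
    (hε : ∀ i, ε i = 0 ∨ ε i = 1) (v : ℕ → ℤ)
    (hv : ∀ k, 2 ≤ k →
      v k = ε (k - 1) * (m (k - 1) 1 + ∑ l ∈ Finset.Ico 2 k, m (k - 1) l * v l))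
    (n : ℕ) (hn2 : 2 ≤ n) (hnd : n ≤ d) :
    v n = ∑ k ∈ Finset.range (n - 1), qSum m ε k n := by
  clear hd hnd hε
  induction n using Nat.strong_induction_on with
  | _ n ih =>
  have hn1 : n - 1 = (n - 2) + 1 := by omega
  rw [hn1, Finset.sum_range_succ']
  have hstep : ∀ k ∈ Finset.range (n-2), qSum m ε (k+1) n =
      ε (n-1) * ∑ l ∈ Finset.Ico 2 n, m (n-1) l * qSum m ε k l := fun k _ =>
    QAux.qSum_rec m ε k hn2
  rw [Finset.sum_congr rfl hstep, QAux.qSum_base m ε hn2, hv n hn2]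
  rw [← Finset.mul_sum, Finset.sum_comm]
  have hinner : ∀ l ∈ Finset.Ico 2 n,
      ∑ k ∈ Finset.range (n-2), m (n-1) l * qSum m ε k l = m (n-1) l * v l := by
    intro l hl
    simp only [Finset.mem_Ico] at hl
    rw [← Finset.mul_sum]
    congr 1
    rw [ih l hl.2 hl.1]
    have hsub : Finset.range (l-1) ⊆ Finset.range (n-2) := by
      apply Finset.range_subset_range.2; omega
    rw [Finset.sum_subset hsub]
    intro k _ hk
    simp only [Finset.mem_range] at hk
    exact QAux.qSum_zero m ε (by omega)
  rw [Finset.sum_congr rfl hinner]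
  ring
end

section
/- Let d ≥ 3. Any integer matrix B of size (2d-1) × (d-1) of the following form is a dominating matrix: the top (d) × (d-1) block is upper-triangular-type with entries α_{j,i} ≥ 0 for i ≤ j, with entry -1 in position (j+1, j) for each column j (i.e., B_{j+1,j} = -1), and zeros below; the bottom (d-1) × (d-1) block has entries β_{j,i} ≥ 0 off the diagonal positions described, entry -1 in position (d+j, j) for each column j, with zeros below; and each column contains at least one positive entry. Here a matrix is called mixed if every column has both a positive and a negative entry, and a mixed matrix is dominating if it contains no mixed square submatrix (of any size ρ ≥ 1). -/
/-- A matrix is *mixed* if every column has both a positive and a negative entry. -/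
def IsMixedMat {ν κ : ℕ} (A : Fin ν → Fin κ → ℤ) : Prop :=
  ∀ c, (∃ r, 0 < A r c) ∧ (∃ r, A r c < 0)

/-- The matrix contains a mixed `ρ × ρ` square submatrix for some `ρ ≥ 1`. -/
def HasMixedSquareSubmatrix {ν κ : ℕ} (A : Fin ν → Fin κ → ℤ) : Prop :=
  ∃ ρ : ℕ, 1 ≤ ρ ∧ ∃ (f : Fin ρ → Fin ν) (g : Fin ρ → Fin κ),
    Function.Injective f ∧ Function.Injective g ∧
      IsMixedMat (fun i j => A (f i) (g j))

/-- A mixed matrix is *dominating* if it contains no mixed square submatrix. -/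
def IsDominating {ν κ : ℕ} (A : Fin ν → Fin κ → ℤ) : Prop :=
  IsMixedMat A ∧ ¬ HasMixedSquareSubmatrix A

theorem stmt2 (d : ℕ) (hd : 3 ≤ d) (B : Fin (2 * d - 1) → Fin (d - 1) → ℤ)
    (hneg1 : ∀ (i : Fin (2 * d - 1)) (j : Fin (d - 1)), (i : ℕ) = (j : ℕ) + 1 → B i j = -1)
    (hneg2 : ∀ (i : Fin (2 * d - 1)) (j : Fin (d - 1)), (i : ℕ) = d + (j : ℕ) → B i j = -1)
    (htopzero : ∀ (i : Fin (2 * d - 1)) (j : Fin (d - 1)),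
      (j : ℕ) + 1 < (i : ℕ) → (i : ℕ) < d → B i j = 0)
    (hbotzero : ∀ (i : Fin (2 * d - 1)) (j : Fin (d - 1)),
      d + (j : ℕ) < (i : ℕ) → B i j = 0)
    (htopnn : ∀ (i : Fin (2 * d - 1)) (j : Fin (d - 1)), (i : ℕ) ≤ (j : ℕ) → 0 ≤ B i j)
    (hbotnn : ∀ (i : Fin (2 * d - 1)) (j : Fin (d - 1)),
      d ≤ (i : ℕ) → (i : ℕ) < d + (j : ℕ) → 0 ≤ B i j)
    (hpos : ∀ j, ∃ i, 0 < B i j) :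
    IsDominating B := by
  -- negative entries are only at rows j+1 and d+j
  have hnegloc : ∀ (i : Fin (2 * d - 1)) (j : Fin (d - 1)),
      B i j < 0 → (i : ℕ) = (j : ℕ) + 1 ∨ (i : ℕ) = d + (j : ℕ) := by
    intro i j hij
    by_contra hc
    push_neg at hc
    rcases lt_trichotomy (i : ℕ) ((j : ℕ) + 1) with h | h | h
    · exact absurd (htopnn i j (by omega)) (by omega)
    · exact hc.1 h
    · rcases lt_trichotomy (i : ℕ) d with h2 | h2 | h2
      · exact absurd (htopzero i j h h2) (by omega)
      · have : (0:ℤ) ≤ B i j := hbotnn i j (by omega) (by omega)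
        omega
      · rcases lt_trichotomy (i : ℕ) (d + (j : ℕ)) with h3 | h3 | h3
        · have : (0:ℤ) ≤ B i j := hbotnn i j (by omega) h3
          omega
        · exact hc.2 h3
        · exact absurd (hbotzero i j h3) (by omega)
  -- positive entries are only at rows ≤ j or in [d, d+j)
  have hposloc : ∀ (i : Fin (2 * d - 1)) (j : Fin (d - 1)),
      0 < B i j → (i : ℕ) ≤ (j : ℕ) ∨ (d ≤ (i : ℕ) ∧ (i : ℕ) < d + (j : ℕ)) := by
    intro i j hij
    by_contra hc
    push_neg at hc
    obtain ⟨h1, h2⟩ := hc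
    rcases lt_trichotomy (i : ℕ) ((j : ℕ) + 1) with h | h | h
    · omega
    · have := hneg1 i j h; omega
    · rcases lt_trichotomy (i : ℕ) d with h3 | h3 | h3
      · have := htopzero i j h h3; omega
      · have h4 : (i : ℕ) = d + (j : ℕ) := by
          have := h2 (by omega); omega
        have := hneg2 i j h4; omega
      · have h4 : d + (j : ℕ) ≤ (i : ℕ) := h2 (by omega)
        rcases eq_or_lt_of_le h4 with h5 | h5
        · have := hneg2 i j h5.symm; omega
        · have := hbotzero i j h5; omega
  constructor
  · intro c
    refine ⟨hpos c, ⟨⟨(c : ℕ) + 1, by omega⟩, ?_⟩⟩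
    have := hneg1 ⟨(c : ℕ) + 1, by omega⟩ c rfl
    omega
  · rintro ⟨ρ, hρ, f, g, hf, hg, hmix⟩
    -- for each j, pick the row index where the column g j is negative
    have hneg : ∀ j : Fin ρ, ∃ i : Fin ρ, B (f i) (g j) < 0 := fun j => (hmix j).2
    choose n hn using hneg
    -- n is injective
    have hninj : Function.Injective n := by
      intro a b hab
      have ha := hnegloc (f (n a)) (g a) (hn a)
      have hb := hnegloc (f (n b)) (g b) (hn b)
      rw [hab] at ha
      have hga : (g a : ℕ) < d - 1 := (g a).isLt
      have hgb : (g b : ℕ) < d - 1 := (g b).isLt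
      have : (g a : ℕ) = (g b : ℕ) := by omega
      exact hg (Fin.ext this)
    have hnsurj : Function.Surjective n :=
      Finite.surjective_of_injective hninj
    -- take the column with minimal index
    obtain ⟨j₀, -, hmin⟩ := Finset.exists_min_image Finset.univ
      (fun j => ((g j : ℕ))) ⟨⟨0, hρ⟩, Finset.mem_univ _⟩
    obtain ⟨p, hp⟩ := (hmix j₀).1
    obtain ⟨j', hj'⟩ := hnsurj p
    have hr : (f p : ℕ) = (g j' : ℕ) + 1 ∨ (f p : ℕ) = d + (g j' : ℕ) := by
      have := hnegloc (f (n j')) (g j') (hn j')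
      rwa [hj'] at this
    have hrp := hposloc (f p) (g j₀) hp
    have hgj' : (g j' : ℕ) < d - 1 := (g j').isLt
    have hgj₀ : (g j₀ : ℕ) < d - 1 := (g j₀).isLt
    have hlt : (g j' : ℕ) < (g j₀ : ℕ) := by omega
    have := hmin j' (Finset.mem_univ _)
    omega
end

section
/- Let d ≥ 3 and let m_{i,j} (1 ≤ j ≤ i ≤ d-1) be integers such that the Nakajima admissibility conditions hold, i.e., for all ε ∈ {0,1}^{d-1} the recursively defined values v_k(ε) := ε_{k-1}(m_{k-1,1} + Σ_{l=2}^{k-1} m_{k-1,l} v_l(ε)) satisfy v_k(ε) ≥ 0. Define recursively λ_{d-2} := min{0, m_{d-1,d-1}}, λ_i := min{0, m_{d-1,i+1} + Σ_{k=i+1}^{d-2} λ_k m_{k,i+1}} for i ≤ d-3, and μ_0 := m_{d-1,1} + Σ_{i=1}^{d-2} λ_i m_{i,1}. Then μ_0 ≥ 0. -/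
private def vrec (ε : ℕ → ℤ) (m : ℕ → ℕ → ℤ) : ℕ → ℤ
  | k =>
    if 2 ≤ k then
      ε (k - 1) * (m (k - 1) 1 + ∑ l ∈ (Finset.Ico 2 k).attach, m (k - 1) l.1 * vrec ε m l.1)
    else 0
  decreasing_by exact (Finset.mem_Ico.mp l.2).2

private lemma vrec_eq (ε : ℕ → ℤ) (m : ℕ → ℕ → ℤ) (k : ℕ) (hk : 2 ≤ k) :
    vrec ε m k = ε (k - 1) * (m (k - 1) 1 + ∑ l ∈ Finset.Ico 2 k, m (k - 1) l * vrec ε m l) := by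
  rw [vrec, if_pos hk,
    Finset.sum_attach (Finset.Ico 2 k) (fun l => m (k - 1) l * vrec ε m l)]

private lemma sum_shift (f : ℕ → ℤ) (a b : ℕ) :
    ∑ l ∈ Finset.Ico (a + 1) (b + 1), f (l - 1) = ∑ i ∈ Finset.Ico a b, f i := by
  rw [Finset.sum_Ico_eq_sum_range, Finset.sum_Ico_eq_sum_range]
  have h : b + 1 - (a + 1) = b - a := by omega
  rw [h]
  exact Finset.sum_congr rfl fun i _ => by congr 1; omega

theorem stmt3 (d : ℕ) (hd : 3 ≤ d) (m : ℕ → ℕ → ℤ)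
    (hm : ∀ i j, i < j → m i j = 0)
    -- admissibility: all recursively defined coordinates `v k (ε)` are non-negative
    (hadm : ∀ ε : ℕ → ℤ, (∀ i, ε i = 0 ∨ ε i = 1) →
      ∀ v : ℕ → ℤ,
        (∀ k, 2 ≤ k →
          v k = ε (k - 1) * (m (k - 1) 1 + ∑ l ∈ Finset.Ico 2 k, m (k - 1) l * v l)) →
      ∀ k, 2 ≤ k → k ≤ d → 0 ≤ v k)
    (lam : ℕ → ℤ)
    (hlamtop : lam (d - 2) = min 0 (m (d - 1) (d - 1)))
    (hlam : ∀ i, 1 ≤ i → i ≤ d - 3 →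
      lam i = min 0 (m (d - 1) (i + 1) + ∑ k ∈ Finset.Icc (i + 1) (d - 2), lam k * m k (i + 1))) :
    0 ≤ m (d - 1) 1 + ∑ i ∈ Finset.Icc 1 (d - 2), lam i * m i 1 := by
  -- uniform recursion for lam
  have hlam' : ∀ i, 1 ≤ i → i ≤ d - 2 →
      lam i = min 0 (m (d - 1) (i + 1) + ∑ k ∈ Finset.Icc (i + 1) (d - 2), lam k * m k (i + 1)) := by
    intro i h1 h2
    rcases eq_or_lt_of_le h2 with h | h
    · subst h
      have h1' : d - 2 + 1 = d - 1 := by omega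
      rw [h1', hlamtop, Finset.Icc_eq_empty (by omega : ¬ d - 1 ≤ d - 2), Finset.sum_empty,
        add_zero]
    · exact hlam i h1 (by omega)
  have hlamle : ∀ i, 1 ≤ i → i ≤ d - 2 → lam i ≤ 0 := fun i h1 h2 => by
    rw [hlam' i h1 h2]; exact min_le_left _ _
  set ε : ℕ → ℤ := fun i => if i = d - 1 ∨ lam i < 0 then 1 else 0 with hεdef
  have hε01 : ∀ i, ε i = 0 ∨ ε i = 1 := by
    intro i
    by_cases h : i = d - 1 ∨ lam i < 0 <;> simp [hεdef, h]
  have hεtop : ε (d - 1) = 1 := by simp [hεdef]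
  have hεzero : ∀ i, i ≠ d - 1 → ¬ lam i < 0 → ε i = 0 := by
    intro i h1 h2; simp [hεdef, h1, h2]
  have hεone : ∀ i, lam i < 0 → ε i = 1 := by
    intro i h; simp [hεdef, h]
  set v : ℕ → ℤ := vrec ε m with hvdef
  have hv : ∀ k, 2 ≤ k →
      v k = ε (k - 1) * (m (k - 1) 1 + ∑ l ∈ Finset.Ico 2 k, m (k - 1) l * v l) :=
    fun k hk => vrec_eq ε m k hk
  have hvpos := hadm ε hε01 v hv
  -- key pointwise identities
  have K1 : ∀ l ∈ Finset.Ico 2 d,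
      (m (d - 1) l + ∑ i ∈ Finset.Icc l (d - 2), lam i * m i l) * v l = lam (l - 1) * v l := by
    intro l hl
    obtain ⟨h2, hld⟩ := Finset.mem_Ico.mp hl
    have hrec := hlam' (l - 1) (by omega) (by omega)
    have hl1 : l - 1 + 1 = l := by omega
    rw [hl1] at hrec
    rcases le_or_gt (m (d - 1) l + ∑ i ∈ Finset.Icc l (d - 2), lam i * m i l) 0 with h | h
    · rw [hrec, min_eq_right h]
    · have hlam0 : lam (l - 1) = 0 := by rw [hrec, min_eq_left h.le]
      have hε0 : ε (l - 1) = 0 := hεzero _ (by omega) (by rw [hlam0]; exact lt_irrefl 0)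
      have hv0 : v l = 0 := by rw [hv l h2, hε0, zero_mul]
      rw [hv0, mul_zero, mul_zero]
  have K2 : ∀ l ∈ Finset.Ico 2 d,
      lam (l - 1) * v l
        = lam (l - 1) * (m (l - 1) 1 + ∑ j ∈ Finset.Ico 2 l, m (l - 1) j * v j) := by
    intro l hl
    obtain ⟨h2, hld⟩ := Finset.mem_Ico.mp hl
    rcases lt_or_eq_of_le (hlamle (l - 1) (by omega) (by omega)) with h | h
    · have hε1 : ε (l - 1) = 1 := hεone _ h
      rw [hv l h2, hε1, one_mul]
    · rw [h, zero_mul, zero_mul]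
  -- the double-sum swap
  have Hswap : ∑ l ∈ Finset.Ico 2 d, lam (l - 1) * ∑ j ∈ Finset.Ico 2 l, m (l - 1) j * v j
      = ∑ j ∈ Finset.Ico 2 d, (∑ i ∈ Finset.Icc j (d - 2), lam i * m i j) * v j := by
    calc ∑ l ∈ Finset.Ico 2 d, lam (l - 1) * ∑ j ∈ Finset.Ico 2 l, m (l - 1) j * v j
        = ∑ l ∈ Finset.Ico 2 d, ∑ j ∈ Finset.Ico 2 l, lam (l - 1) * (m (l - 1) j * v j) := by
          simp [Finset.mul_sum]
      _ = ∑ j ∈ Finset.Ico 2 d, ∑ l ∈ Finset.Ico (j + 1) d, lam (l - 1) * (m (l - 1) j * v j) :=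
          (Finset.sum_Ico_Ico_comm' 2 d fun j l => lam (l - 1) * (m (l - 1) j * v j)).symm
      _ = ∑ j ∈ Finset.Ico 2 d, (∑ i ∈ Finset.Icc j (d - 2), lam i * m i j) * v j := by
          refine Finset.sum_congr rfl fun j hj => ?_
          have hb : d = (d - 1) + 1 := by omega
          rw [hb, sum_shift (fun i => lam i * (m i j * v j)) j (d - 1)]
          have hI : Finset.Ico j (d - 1) = Finset.Icc j (d - 2) := by
            have : d - 1 = (d - 2) + 1 := by omega
            rw [this, Finset.Ico_add_one_right_eq_Icc]
          rw [hI, Finset.sum_mul]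
          exact Finset.sum_congr rfl fun i _ => by ring
  -- the base-row shift
  have Hbase : ∑ l ∈ Finset.Ico 2 d, lam (l - 1) * m (l - 1) 1
      = ∑ i ∈ Finset.Icc 1 (d - 2), lam i * m i 1 := by
    have hb : d = (d - 1) + 1 := by omega
    rw [show (2 : ℕ) = 1 + 1 from rfl, hb, sum_shift (fun i => lam i * m i 1) 1 (d - 1)]
    have hI : Finset.Ico 1 (d - 1) = Finset.Icc 1 (d - 2) := by
      have : d - 1 = (d - 2) + 1 := by omega
      rw [this, Finset.Ico_add_one_right_eq_Icc]
    rw [hI]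
    have h2 : d - 1 + 1 - (1 + 1) = d - 2 := by omega
    rw [h2]
  -- combine
  have E : ∑ l ∈ Finset.Ico 2 d,
        (m (d - 1) l + ∑ i ∈ Finset.Icc l (d - 2), lam i * m i l) * v l
      = ∑ l ∈ Finset.Ico 2 d,
        lam (l - 1) * (m (l - 1) 1 + ∑ j ∈ Finset.Ico 2 l, m (l - 1) j * v j) :=
    Finset.sum_congr rfl fun l hl => (K1 l hl).trans (K2 l hl)
  have EL : ∑ l ∈ Finset.Ico 2 d,
        (m (d - 1) l + ∑ i ∈ Finset.Icc l (d - 2), lam i * m i l) * v l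
      = (∑ l ∈ Finset.Ico 2 d, m (d - 1) l * v l)
        + ∑ l ∈ Finset.Ico 2 d, (∑ i ∈ Finset.Icc l (d - 2), lam i * m i l) * v l := by
    rw [← Finset.sum_add_distrib]
    exact Finset.sum_congr rfl fun l _ => by ring
  have ER : ∑ l ∈ Finset.Ico 2 d,
        lam (l - 1) * (m (l - 1) 1 + ∑ j ∈ Finset.Ico 2 l, m (l - 1) j * v j)
      = (∑ i ∈ Finset.Icc 1 (d - 2), lam i * m i 1)
        + ∑ l ∈ Finset.Ico 2 d, (∑ i ∈ Finset.Icc l (d - 2), lam i * m i l) * v l := by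
    rw [← Hbase, ← Hswap, ← Finset.sum_add_distrib]
    exact Finset.sum_congr rfl fun l _ => by ring
  have key : ∑ l ∈ Finset.Ico 2 d, m (d - 1) l * v l
      = ∑ i ∈ Finset.Icc 1 (d - 2), lam i * m i 1 := by
    have := EL.symm.trans (E.trans ER)
    linarith
  have hvd := hvpos d (by omega) le_rfl
  rw [hv d (by omega), hεtop, one_mul, key] at hvd
  exact hvd
end

section
/- Let d ≥ 2 and m an admissible Nakajima parameter matrix of length d-1. Set S_m^{(d)} := { v(ε) : ε ∈ {0,1}^{d-1} }, where v(ε) = (1, v_2(ε), …, v_d(ε))^⊤ with v_k(ε) := ε_{k-1}(m_{k-1,1} + Σ_{l=2}^{k-1} m_{k-1,l} v_l(ε)). Then the Nakajima polytope P_m^{(d)} equals the convex hull of S_m^{(d)}, and every element of S_m^{(d)} has all coordinates non-negative. -/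
/-- Replace the `k`-th coordinate of `x` by `0`. -/
def coordZero {d : ℕ} (x : Fin d → ℝ) (k : ℕ) : Fin d → ℝ :=
  fun j => if (j : ℕ) = k then 0 else x j

/-- The `k`-th (0-based) coordinate of `x`, or `0` if out of range. -/
def coordN {d : ℕ} (x : Fin d → ℝ) (k : ℕ) : ℝ :=
  if h : k < d then x ⟨k, h⟩ else 0

/-- The pairing `⟨m_i, x⟩ = ∑_{l=1}^{i} m_{i,l} x_l` of the row `m_i` with the
first `i` coordinates of `x`. -/
def nakPairing {d : ℕ} (m : ℕ → ℕ → ℤ) (i : ℕ) (x : Fin d → ℝ) : ℝ :=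
  ∑ j ∈ Finset.univ.filter (fun j : Fin d => (j : ℕ) < i), (m i ((j : ℕ) + 1) : ℝ) * x j

/-- The inductively defined Nakajima polytopes `P_m^{(i)} ⊂ ℝ^d`:
`P_m^{(1)} = {e₁}` and
`P_m^{(i)} = { (x', x_i, 0,…,0) : (x',0,…,0) ∈ P_m^{(i-1)}, 0 ≤ x_i ≤ ⟨m_{i-1}, x'⟩ }`. -/
def nakP (d : ℕ) (m : ℕ → ℕ → ℤ) : ℕ → Set (Fin d → ℝ)
  | 0 => ∅
  | 1 => {fun j : Fin d => if (j : ℕ) = 0 then (1 : ℝ) else 0}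
  | i + 2 =>
      { x | coordZero x (i + 1) ∈ nakP d m (i + 1) ∧
        0 ≤ coordN x (i + 1) ∧ coordN x (i + 1) ≤ nakPairing m (i + 1) x }

/-- Admissibility of the parameter matrix `m`:
`⟨m_{i-1}, x⟩ ≥ 0` for all `x ∈ P_m^{(i-1)}`, `2 ≤ i ≤ d`. -/
def NakAdmissibleR (d : ℕ) (m : ℕ → ℕ → ℤ) : Prop :=
  ∀ i, 2 ≤ i → i ≤ d → ∀ x ∈ nakP d m (i - 1), 0 ≤ nakPairing m (i - 1) x

/-- The recursively defined candidate-vertex coordinates: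
`v₁(ε) = 1` and `v_k(ε) = ε_{k-1}(m_{k-1,1} + ∑_{l=2}^{k-1} m_{k-1,l} v_l(ε))`. -/
def nakV (m : ℕ → ℕ → ℤ) (ε : ℕ → ℤ) : ℕ → ℤ
  | 0 => 0
  | 1 => 1
  | k + 2 =>
      ε (k + 1) * (m (k + 1) 1 +
        ∑ l : Fin (k + 2), if 2 ≤ (l : ℕ) then m (k + 1) (l : ℕ) * nakV m ε (l : ℕ) else 0)
termination_by n => n
decreasing_by exact l.isLt
section Aux
variable {d : ℕ} (m : ℕ → ℕ → ℤ)

lemma nakV_congr (ε ε' : ℕ → ℤ) : ∀ k, (∀ j, j < k → ε j = ε' j) → nakV m ε k = nakV m ε' k := by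
  intro k
  induction k using Nat.strong_induction_on with
  | _ k ih =>
    match k with
    | 0 => intro _; rw [nakV, nakV]
    | 1 => intro _; rw [nakV, nakV]
    | k + 2 =>
      intro h
      rw [nakV, nakV, h (k+1) (by omega)]
      congr 1
      congr 1
      apply Finset.sum_congr rfl
      intro l _
      rw [ih l l.isLt (fun j hj => h j (by omega))]
/-- The vertex vector. -/
def nakVec (d : ℕ) (m : ℕ → ℕ → ℤ) (ε : ℕ → ℤ) : Fin d → ℝ :=
  fun j : Fin d => ((nakV m ε ((j : ℕ) + 1) : ℤ) : ℝ)

lemma nakV_one (ε : ℕ → ℤ) : nakV m ε 1 = 1 := by rw [nakV]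

lemma nakV_succ_eq (ε : ℕ → ℤ) (n : ℕ) :
    nakV m ε (n + 2)
      = ε (n + 1) * ∑ j ∈ Finset.range (n + 1), m (n + 1) (j + 1) * nakV m ε (j + 1) := by
  rw [nakV]
  congr 1
  rw [Fin.sum_univ_eq_sum_range (fun l => if 2 ≤ l then m (n+1) l * nakV m ε l else 0) (n+2)]
  rw [Finset.sum_range_succ' (fun l => if 2 ≤ l then m (n+1) l * nakV m ε l else 0) (n+1)]
  rw [Finset.sum_range_succ' (fun l => if 2 ≤ l + 1 then m (n+1) (l+1) * nakV m ε (l+1) else 0) n]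
  rw [Finset.sum_range_succ' (fun j => m (n + 1) (j + 1) * nakV m ε (j + 1)) n]
  simp [nakV_one, Nat.succ_le_succ_iff]
  ring

lemma nakVec_coordN (ε : ℕ → ℤ) {k : ℕ} (hk : k < d) :
    coordN (nakVec d m ε) k = ((nakV m ε (k + 1) : ℤ) : ℝ) := by
  simp [coordN, nakVec, hk]

lemma coordN_fin (x : Fin d → ℝ) (j : Fin d) : coordN x (j : ℕ) = x j := by
  simp [coordN, j.isLt]

lemma nakPairing_eq_range (i : ℕ) (hi : i ≤ d) (x : Fin d → ℝ) :
    nakPairing m i x = ∑ j ∈ Finset.range i, (m i (j + 1) : ℝ) * coordN x j := by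
  rw [nakPairing, Finset.sum_filter]
  have h : ∀ j : Fin d, (if (j:ℕ) < i then (m i ((j:ℕ)+1) : ℝ) * x j else 0)
      = (fun k => if k < i then (m i (k+1) : ℝ) * coordN x k else 0) (j : ℕ) := by
    intro j; simp only [coordN, j.isLt, dif_pos]
  rw [Finset.sum_congr rfl (fun j _ => h j),
    Fin.sum_univ_eq_sum_range (fun k => if k < i then ((m i (k+1)):ℝ) * coordN x k else 0) d]
  rw [← Finset.sum_subset (Finset.range_subset_range.2 hi)
    (fun k _ hk => if_neg (by simpa using hk))]
  exact Finset.sum_congr rfl (fun j hj => if_pos (Finset.mem_range.1 hj))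

lemma nakV_eq_pairing (ε : ℕ → ℤ) (n : ℕ) (hn : n + 1 ≤ d) :
    ((nakV m ε (n + 2) : ℤ) : ℝ) = (ε (n + 1) : ℝ) * nakPairing m (n + 1) (nakVec d m ε) := by
  rw [nakV_succ_eq, nakPairing_eq_range m (n+1) hn]
  push_cast
  congr 1
  refine Finset.sum_congr rfl (fun j hj => ?_)
  rw [nakVec_coordN m ε (lt_of_lt_of_le (Finset.mem_range.1 hj) hn)]

lemma nakPairing_congr (i : ℕ) (x y : Fin d → ℝ) (h : ∀ j : Fin d, (j:ℕ) < i → x j = y j) :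
    nakPairing m i x = nakPairing m i y := by
  unfold nakPairing
  exact Finset.sum_congr rfl
    (fun j hj => by rw [h j (by simpa using (Finset.mem_filter.1 hj).2)])

lemma nakPairing_comb (i : ℕ) (a b : ℝ) (x y : Fin d → ℝ) :
    nakPairing m i (a • x + b • y) = a * nakPairing m i x + b * nakPairing m i y := by
  unfold nakPairing
  rw [Finset.mul_sum, Finset.mul_sum, ← Finset.sum_add_distrib]
  refine Finset.sum_congr rfl (fun j _ => ?_)
  simp only [Pi.add_apply, Pi.smul_apply, smul_eq_mul]
  ring
lemma nakP_zero_coord : ∀ i, ∀ x ∈ nakP d m i, ∀ j : Fin d, i ≤ (j:ℕ) → x j = 0 := by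
  intro i
  induction i using Nat.strong_induction_on with
  | _ i ih =>
    match i with
    | 0 => intro x hx; simp [nakP] at hx
    | 1 =>
      intro x hx j hj
      rw [nakP] at hx
      simp only [Set.mem_singleton_iff] at hx
      subst hx
      simp [show ¬ ((j:ℕ) = 0) by omega]
    | i + 2 =>
      intro x hx j hj
      rw [nakP] at hx
      have h := ih (i+1) (by omega) _ hx.1 j (by omega)
      simpa [coordZero, show ¬ ((j:ℕ) = i+1) by omega] using h

lemma nakP_convex : ∀ i, Convex ℝ (nakP d m i) := by
  intro i
  induction i using Nat.strong_induction_on with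
  | _ i ih =>
    match i with
    | 0 => rw [nakP]; exact convex_empty
    | 1 => rw [nakP]; exact convex_singleton _
    | i + 2 =>
      intro x hx y hy a b ha hb hab
      rw [nakP] at hx hy ⊢
      obtain ⟨hx1, hx2, hx3⟩ := hx
      obtain ⟨hy1, hy2, hy3⟩ := hy
      have hz : coordZero (a • x + b • y) (i+1)
          = a • coordZero x (i+1) + b • coordZero y (i+1) := by
        funext j; by_cases h : (j:ℕ) = i+1 <;> simp [coordZero, h]
      have hc : ∀ z w : Fin d → ℝ,
          coordN (a • z + b • w) (i+1) = a * coordN z (i+1) + b * coordN w (i+1) := by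
        intro z w; unfold coordN; split <;> simp
      refine ⟨?_, ?_, ?_⟩
      · rw [hz]; exact ih (i+1) (by omega) hx1 hy1 ha hb hab
      · rw [hc]; exact add_nonneg (mul_nonneg ha hx2) (mul_nonneg hb hy2)
      · rw [hc, nakPairing_comb]
        exact add_le_add (mul_le_mul_of_nonneg_left hx3 ha)
          (mul_le_mul_of_nonneg_left hy3 hb)

/-- Coordinates `j ≠ k` of `nakVec` don't change when `ε` is updated at `k`,
provided all later `ε`'s vanish for both. -/
lemma nakVec_update (ε : ℕ → ℤ) (k : ℕ) (hk : 1 ≤ k) (hsupp : ∀ j, k + 1 ≤ j → ε j = 0)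
    (c : ℤ) (j : Fin d) (hj : (j : ℕ) ≠ k) :
    nakVec d m (Function.update ε k c) j = nakVec d m ε j := by
  unfold nakVec
  rcases lt_or_gt_of_ne hj with h | h
  · rw [nakV_congr m _ ε ((j:ℕ)+1)
      (fun l hl => Function.update_of_ne (by omega) _ _)]
  · -- (j:ℕ) > k, so (j:ℕ) ≥ k+1 ≥ 2, both sides are 0
    obtain ⟨n, hn⟩ : ∃ n, (j:ℕ) = n + 1 := ⟨(j:ℕ)-1, by omega⟩
    rw [hn, nakV_succ_eq, nakV_succ_eq, Function.update_of_ne (by omega),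
      hsupp (n+1) (by omega)]
    simp

lemma nakVec_zero_of_supp (ε : ℕ → ℤ) {k : ℕ} (hk : 1 ≤ k) (hε : ε k = 0) (j : Fin d) (hj : (j:ℕ) = k) :
    nakVec d m ε j = 0 := by
  unfold nakVec
  obtain ⟨n, hn⟩ : ∃ n, (j:ℕ) = n + 1 := ⟨(j:ℕ)-1, by omega⟩
  rw [hn, nakV_succ_eq, show n + 1 = k by omega, hε]
  simp
/-- The candidate vertex sets, with `ε` supported on `[1, i-1]`. -/
def nakS (d : ℕ) (m : ℕ → ℕ → ℤ) (i : ℕ) : Set (Fin d → ℝ) :=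
  {x | ∃ ε : ℕ → ℤ, (∀ j, ε j = 0 ∨ ε j = 1) ∧ (∀ j, i ≤ j → ε j = 0) ∧ x = nakVec d m ε}

lemma nakVec_mem (hadm : NakAdmissibleR d m) :
    ∀ i, 1 ≤ i → i ≤ d → ∀ ε : ℕ → ℤ, (∀ j, ε j = 0 ∨ ε j = 1) →
      (∀ j, i ≤ j → ε j = 0) → nakVec d m ε ∈ nakP d m i := by
  intro i
  induction i using Nat.strong_induction_on with
  | _ i ih =>
    match i with
    | 0 => intro h; omega
    | 1 =>
      intro _ _ ε hε hsupp
      rw [nakP]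
      simp only [Set.mem_singleton_iff]
      funext j
      by_cases h : (j:ℕ) = 0
      · simp [nakVec, h, nakV_one]
      · rw [nakVec_zero_of_supp m ε (k := (j:ℕ)) (by omega) (hsupp _ (by omega)) j rfl]
        simp [h]
    | i + 2 =>
      intro _ hle ε hε hsupp
      rw [nakP]
      set ε' := Function.update ε (i+1) 0 with hε'def
      have hε'01 : ∀ j, ε' j = 0 ∨ ε' j = 1 := by
        intro j
        by_cases h : j = i+1
        · subst h; left; simp [ε']
        · rw [hε'def, Function.update_of_ne h]; exact hε j
      have hsupp' : ∀ j, i+1 ≤ j → ε' j = 0 := by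
        intro j hj
        by_cases h : j = i+1
        · subst h; simp [ε']
        · rw [hε'def, Function.update_of_ne h]; exact hsupp j (by omega)
      have hmem' : nakVec d m ε' ∈ nakP d m (i+1) :=
        ih (i+1) (by omega) (by omega) (by omega) ε' hε'01 hsupp'
      have hupd : ∀ j : Fin d, (j:ℕ) ≠ i+1 → nakVec d m ε' j = nakVec d m ε j :=
        fun j hj => nakVec_update m ε (i+1) (by omega)
          (fun l hl => hsupp l (by omega)) 0 j hj
      have hcz : coordZero (nakVec d m ε) (i+1) = nakVec d m ε' := by
        funext j
        by_cases h : (j:ℕ) = i+1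
        · simp only [coordZero, h, if_pos rfl]
          exact (nakVec_zero_of_supp m ε' (by omega) (by simp [ε']) j h).symm
        · simp only [coordZero, if_neg h]
          exact (hupd j h).symm
      have hpair_eq : nakPairing m (i+1) (nakVec d m ε) = nakPairing m (i+1) (nakVec d m ε') :=
        nakPairing_congr m (i+1) _ _ (fun j hj => (hupd j (by omega)).symm)
      have hpos : 0 ≤ nakPairing m (i+1) (nakVec d m ε') :=
        hadm (i+2) (by omega) hle _ hmem'
      have hcoord : coordN (nakVec d m ε) (i+1) = ((nakV m ε (i+2) : ℤ):ℝ) :=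
        nakVec_coordN m ε (by omega)
      have hval : ((nakV m ε (i+2):ℤ):ℝ)
          = (ε (i+1):ℝ) * nakPairing m (i+1) (nakVec d m ε) :=
        nakV_eq_pairing m ε i (by omega)
      refine ⟨hcz ▸ hmem', ?_, ?_⟩
      · rw [hcoord, hval]
        rcases hε (i+1) with h|h <;> rw [h]
        · simp
        · rw [hpair_eq]; simpa using hpos
      · rw [hcoord, hval]
        rcases hε (i+1) with h|h <;> rw [h]
        · rw [hpair_eq] at *; simpa using hpos
        · simp
lemma nakPairing_add (i : ℕ) (x y : Fin d → ℝ) :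
    nakPairing m i (x + y) = nakPairing m i x + nakPairing m i y := by
  unfold nakPairing
  rw [← Finset.sum_add_distrib]
  exact Finset.sum_congr rfl (fun j _ => by simp [mul_add])

lemma nakPairing_smul (i : ℕ) (a : ℝ) (x : Fin d → ℝ) :
    nakPairing m i (a • x) = a * nakPairing m i x := by
  unfold nakPairing
  rw [Finset.mul_sum]
  exact Finset.sum_congr rfl (fun j _ => by simp; ring)

/-- The linear "lift" map `y ↦ y + ⟨m_n, y⟩ eₙ`. -/
def nakLift (d : ℕ) (m : ℕ → ℕ → ℤ) (n : ℕ) : (Fin d → ℝ) →ₗ[ℝ] (Fin d → ℝ) where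
  toFun y := y + nakPairing m n y • (fun j : Fin d => if (j : ℕ) = n then (1:ℝ) else 0)
  map_add' y z := by rw [nakPairing_add]; funext j; simp; split <;> ring
  map_smul' a y := by rw [nakPairing_smul]; funext j; simp; split <;> ring

lemma nakLift_apply (n : ℕ) (y : Fin d → ℝ) (j : Fin d) :
    nakLift d m n y j = y j + nakPairing m n y * (if (j : ℕ) = n then (1:ℝ) else 0) := rfl

lemma nakS_mono {i i' : ℕ} (h : i ≤ i') : nakS d m i ⊆ nakS d m i' := by
  rintro x ⟨ε, hε, hsupp, rfl⟩
  exact ⟨ε, hε, fun j hj => hsupp j (by omega), rfl⟩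

/-- `nakLift` maps `S_{n+1}` into `S_{n+2}`. -/
lemma nakLift_mem_nakS (n : ℕ) (hn : n + 1 ≤ d) {y : Fin d → ℝ} (hy : y ∈ nakS d m (n+1)) :
    nakLift d m (n+1) y ∈ nakS d m (n+2) := by
  obtain ⟨ε, hε, hsupp, rfl⟩ := hy
  set ε' := Function.update ε (n+1) 1 with hε'def
  refine ⟨ε', ?_, ?_, ?_⟩
  · intro j
    by_cases h : j = n+1
    · subst h; right; simp [ε']
    · rw [hε'def, Function.update_of_ne h]; exact hε j
  · intro j hj
    rw [hε'def, Function.update_of_ne (by omega)]; exact hsupp j (by omega)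
  · have hupd : ∀ j : Fin d, (j:ℕ) ≠ n+1 → nakVec d m ε' j = nakVec d m ε j :=
      fun j hj => nakVec_update m ε (n+1) (by omega)
        (fun l hl => hsupp l (by omega)) 1 j hj
    have hpair_eq : nakPairing m (n+1) (nakVec d m ε') = nakPairing m (n+1) (nakVec d m ε) :=
      nakPairing_congr m (n+1) _ _ (fun j hj => hupd j (by omega))
    funext j
    rw [nakLift_apply]
    by_cases h : (j:ℕ) = n+1
    · rw [if_pos h, mul_one,
        nakVec_zero_of_supp m ε (k := n+1) (by omega) (hsupp _ le_rfl) j h, zero_add]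
      have : nakVec d m ε' j = ((nakV m ε' (n + 2) : ℤ):ℝ) := by
        unfold nakVec; rw [h]
      rw [this, nakV_eq_pairing m ε' n hn, hε'def]
      simp only [Function.update_self, Int.cast_one, one_mul]
      rw [← hε'def, hpair_eq]
    · rw [if_neg h, mul_zero, add_zero, hupd j h]

lemma nakP_eq_hull (hadm : NakAdmissibleR d m) :
    ∀ i, 1 ≤ i → i ≤ d → nakP d m i = convexHull ℝ (nakS d m i) := by
  intro i
  induction i using Nat.strong_induction_on with
  | _ i ih =>
    match i with
    | 0 => exact fun h => absurd h (by omega)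
    | 1 =>
      intro _ h1
      have hS : nakS d m 1 = {fun j : Fin d => if (j:ℕ) = 0 then (1:ℝ) else 0} := by
        ext x
        constructor
        · rintro ⟨ε, hε, hsupp, rfl⟩
          have := nakVec_mem m hadm 1 le_rfl h1 ε hε hsupp
          rw [nakP] at this
          exact this
        · intro hx
          rw [Set.mem_singleton_iff] at hx
          refine ⟨fun _ => 0, fun j => Or.inl rfl, fun j _ => rfl, ?_⟩
          have := nakVec_mem m hadm 1 le_rfl h1 (fun _ => 0)
            (fun j => Or.inl rfl) (fun j _ => rfl)
          rw [nakP, Set.mem_singleton_iff] at this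
          rw [hx, this]
      rw [nakP, hS, convexHull_singleton]
    | n + 2 =>
      intro _ hle
      have IH := ih (n+1) (by omega) (by omega) (by omega)
      apply Set.Subset.antisymm
      · -- nakP ⊆ hull
        intro x hx
        rw [nakP] at hx
        obtain ⟨h1, h2, h3⟩ := hx
        set xb := coordZero x (n+1) with hxbdef
        have hxbhull : xb ∈ convexHull ℝ (nakS d m (n+1)) := IH ▸ h1
        have hxbj : ∀ j : Fin d, (j:ℕ) ≠ n+1 → xb j = x j := by
          intro j hj; simp [hxbdef, coordZero, hj]
        have hfx : nakPairing m (n+1) xb = nakPairing m (n+1) x :=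
          nakPairing_congr m (n+1) _ _ (fun j hj => hxbj j (by omega))
        have hf0 : 0 ≤ nakPairing m (n+1) xb := hadm (n+2) (by omega) hle xb h1
        have hxmem : ∀ j : Fin d, (j:ℕ) = n+1 → x j = coordN x (n+1) := by
          intro j hj; rw [← hj, coordN_fin]
        have hxb0 : ∀ j : Fin d, (j:ℕ) = n+1 → xb j = 0 := by
          intro j hj; simp [hxbdef, coordZero, hj]
        have hsub : convexHull ℝ (nakS d m (n+1)) ⊆ convexHull ℝ (nakS d m (n+2)) :=
          convexHull_mono (nakS_mono m (by omega))
        by_cases hzero : nakPairing m (n+1) xb = 0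
        · have ht0 : coordN x (n+1) = 0 := le_antisymm (by rw [← hfx] at h3; linarith) h2
          have : x = xb := by
            funext j
            by_cases h : (j:ℕ) = n+1
            · rw [hxb0 j h, hxmem j h, ht0]
            · exact (hxbj j h).symm
          rw [this]
          exact hsub hxbhull
        · set s := coordN x (n+1) / nakPairing m (n+1) xb with hsdef
          have hfpos : 0 < nakPairing m (n+1) xb := lt_of_le_of_ne hf0 (Ne.symm hzero)
          have hs0 : 0 ≤ s := div_nonneg h2 hf0
          have hs1 : s ≤ 1 := by
            rw [hsdef, div_le_one hfpos, hfx]; exact h3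
          have hLmem : nakLift d m (n+1) xb ∈ convexHull ℝ (nakS d m (n+2)) := by
            have himg := (nakLift d m (n+1)).image_convexHull (nakS d m (n+1))
            have : nakLift d m (n+1) xb ∈ (nakLift d m (n+1)) '' (convexHull ℝ (nakS d m (n+1))) :=
              Set.mem_image_of_mem _ hxbhull
            rw [himg] at this
            refine convexHull_mono ?_ this
            rintro y ⟨y', hy', rfl⟩
            exact nakLift_mem_nakS m n (by omega) hy'
          have hx_eq : x = (1 - s) • xb + s • (nakLift d m (n+1) xb) := by
            funext j
            rw [Pi.add_apply, Pi.smul_apply, Pi.smul_apply, smul_eq_mul, smul_eq_mul,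
              nakLift_apply]
            by_cases h : (j:ℕ) = n+1
            · rw [if_pos h, mul_one, hxb0 j h, hxmem j h, hsdef]
              field_simp
              ring
            · rw [if_neg h, mul_zero, add_zero, ← hxbj j h]
              ring
          rw [hx_eq]
          exact (convex_convexHull ℝ _) (hsub hxbhull) hLmem (by linarith) hs0 (by ring)
      · -- hull ⊆ nakP
        apply convexHull_min ?_ (nakP_convex m (n+2))
        rintro x ⟨ε, hε, hsupp, rfl⟩
        exact nakVec_mem m hadm (n+2) (by omega) hle ε hε hsupp

end Aux
theorem stmt13 (d : ℕ) (hd : 2 ≤ d) (m : ℕ → ℕ → ℤ)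
    -- lower-triangularity: `m i j = 0` for `j > i` (1-based indices)
    (hm : ∀ i j, i < j → m i j = 0)
    (hadm : NakAdmissibleR d m) :
    -- `P_m^{(d)}` is the convex hull of `S_m^{(d)} = {v(ε) : ε ∈ {0,1}^{d-1}}` …
    nakP d m d = convexHull ℝ
      { x : Fin d → ℝ | ∃ ε : ℕ → ℤ, (∀ i, ε i = 0 ∨ ε i = 1) ∧
          x = fun j : Fin d => ((nakV m ε ((j : ℕ) + 1) : ℤ) : ℝ) } ∧
    -- … and every element of `S_m^{(d)}` has all coordinates non-negative
    (∀ ε : ℕ → ℤ, (∀ i, ε i = 0 ∨ ε i = 1) →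
      ∀ k, 1 ≤ k → k ≤ d → 0 ≤ nakV m ε k) := by
  constructor
  · rw [nakP_eq_hull m hadm d (by omega) le_rfl]
    congr 1
    ext x
    constructor
    · rintro ⟨ε, hε, hsupp, rfl⟩
      exact ⟨ε, hε, rfl⟩
    · rintro ⟨ε, hε, rfl⟩
      refine ⟨fun j => if j < d then ε j else 0, ?_, ?_, ?_⟩
      · intro j
        by_cases h : j < d
        · simpa [h] using hε j
        · simp [h]
      · intro j hj; simp [show ¬ j < d by omega]
      · funext j
        show ((nakV m ε ((j:ℕ)+1) : ℤ) : ℝ) = _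
        unfold nakVec
        rw [nakV_congr m ε (fun l => if l < d then ε l else 0) ((j:ℕ)+1)
          (fun l hl => by simp [show l < d by omega])]
  · intro ε hε k hk1 hkd
    match k, hk1, hkd with
    | 1, _, _ => rw [nakV_one]; norm_num
    | (n+2), _, hkd =>
      have h1 : (0:ℝ) ≤ ((nakV m ε (n+2) : ℤ) : ℝ) := by
        rw [nakV_eq_pairing (d := d) m ε n (by omega)]
        set ε' : ℕ → ℤ := fun j => if j < n+1 then ε j else 0 with hε'def
        have hpe : nakPairing m (n+1) (nakVec d m ε) = nakPairing m (n+1) (nakVec d m ε') := by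
          apply nakPairing_congr
          intro j hj
          unfold nakVec
          rw [nakV_congr m ε ε' ((j:ℕ)+1)
            (fun l hl => by simp [hε'def, show l < n+1 by omega, show l ≤ n by omega])]
        have hmem : nakVec d m ε' ∈ nakP d m (n+1) :=
          nakVec_mem m hadm (n+1) (by omega) (by omega) ε'
            (fun j => by by_cases h : j ≤ n <;> simp [hε'def, h, hε j])
            (fun j hj => by simp [hε'def, show ¬ j < n+1 by omega, show ¬ j ≤ n by omega])
        have hpos := hadm (n+2) (by omega) (by omega) _ hmem
        rw [hpe]
        rcases hε (n+1) with h|h <;> rw [h]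
        · simp
        · simpa using hpos
      exact_mod_cast h1
end

section
/- Let d ≥ 3 and m an admissible Nakajima parameter matrix, τ := pos(P_m^{(d)}). For ε_1,…,ε_{d-1} ∈ {0,1} define the cone C_ε := pos( {e_1^∨} ∪ { ε_i e_{i+1}^∨ + (1-ε_i)(m_i - e_{i+1}^∨) : 1 ≤ i ≤ d-1 } ). Then the 2^{d-1} cones C_ε form a subdivision of τ^∨ into basic (unimodular) cones with respect to (ℤ^d)^∨: each C_ε is generated by a ℤ-basis of (ℤ^d)^∨, the union of all C_ε equals τ^∨, and the intersection of any two such cones C_ε ∩ C_{ε'} equals pos( {e_1^∨} ∪ { ε_{i-1} e_i^∨ + (1-ε_{i-1})(m_{i-1} - e_i^∨) : i ∈ {2,…,d}, ε_{i-1} = ε'_{i-1} } ), a common face of both. -/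
/-- The cone `τ = pos(P_m^{(d)})` over the Nakajima polytope. -/
def nakConeTau (d : ℕ) (m : ℕ → ℕ → ℤ) : Set (Fin d → ℝ) :=
  { y | ∃ (r : ℝ) (x : Fin d → ℝ), 0 ≤ r ∧ x ∈ nakP d m d ∧ y = r • x }

/-- The generators of the cone `C_ε`: `e₁^∨`, and for `1 ≤ i ≤ d-1` the vector
`ε_i e_{i+1}^∨ + (1-ε_i)(m_i - e_{i+1}^∨)` (0-based row index `i`). -/
def nakGenZ (d : ℕ) (m : ℕ → ℕ → ℤ) (ε : ℕ → ℤ) (i j : Fin d) : ℤ :=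
  if (i : ℕ) = 0 then (if (j : ℕ) = 0 then 1 else 0)
  else ε (i : ℕ) * (if j = i then 1 else 0) +
    (1 - ε (i : ℕ)) * (m (i : ℕ) ((j : ℕ) + 1) - (if j = i then 1 else 0))

/-- The basic cone `C_ε = pos({e₁^∨} ∪ {ε_i e_{i+1}^∨ + (1-ε_i)(m_i - e_{i+1}^∨)})`. -/
def nakCε (d : ℕ) (m : ℕ → ℕ → ℤ) (ε : ℕ → ℤ) : Set (Fin d → ℝ) :=
  { y | ∃ a : Fin d → ℝ, (∀ i, 0 ≤ a i) ∧
      ∀ j : Fin d, y j = ∑ i : Fin d, a i * (nakGenZ d m ε i j : ℝ) }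

section lemmas
variable {d : ℕ} {m : ℕ → ℕ → ℤ} {ε : ℕ → ℤ}

lemma genZ_lt (hm : ∀ i j, i < j → m i j = 0) (ε : ℕ → ℤ) (i j : Fin d)
    (h : (i : ℕ) < (j : ℕ)) : nakGenZ d m ε i j = 0 := by
  unfold nakGenZ
  have hne : ¬ (j = i) := by
    intro e; subst e; exact lt_irrefl _ h
  have hj0 : ¬ ((j : ℕ) = 0) := by omega
  rcases Nat.eq_zero_or_pos (i : ℕ) with h0 | h0
  · simp [h0, hj0]
  · have : (i : ℕ) ≠ 0 := by omega
    simp [this, hne, hm (i : ℕ) ((j : ℕ) + 1) (by omega)]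

lemma genZ_diag (ε : ℕ → ℤ) (hm : ∀ i j, i < j → m i j = 0) (j : Fin d) :
    nakGenZ d m ε j j = if (j : ℕ) = 0 then 1 else 2 * ε (j : ℕ) - 1 := by
  unfold nakGenZ
  split
  · simp_all
  · rename_i h
    simp [hm (j : ℕ) ((j : ℕ) + 1) (by omega)]
    ring

lemma det_part (d : ℕ) (m : ℕ → ℕ → ℤ) (hm : ∀ i j, i < j → m i j = 0)
    (ε : ℕ → ℤ) (hε : ∀ i, ε i = 0 ∨ ε i = 1) :
    (Matrix.of (nakGenZ d m ε)).det = 1 ∨ (Matrix.of (nakGenZ d m ε)).det = -1 := by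
  have htri : (Matrix.of (nakGenZ d m ε)).BlockTriangular OrderDual.toDual := by
    intro i j h
    exact genZ_lt hm ε i j h
  rw [Matrix.det_of_lowerTriangular _ htri]
  apply Finset.prod_induction _ (fun x => x = 1 ∨ x = -1)
  · rintro a b (ha | ha) (hb | hb) <;> simp [ha, hb]
  · left; rfl
  · intro j _
    rw [Matrix.of_apply, genZ_diag ε hm]
    split
    · left; rfl
    · rcases hε (j : ℕ) with h | h <;> simp [h]

end lemmas

section struct
variable {d : ℕ} {m : ℕ → ℕ → ℤ}

lemma pairing_congr {i : ℕ} {x x' : Fin d → ℝ}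
    (h : ∀ j : Fin d, (j : ℕ) < i → x j = x' j) :
    nakPairing m i x = nakPairing m i x' := by
  unfold nakPairing
  apply Finset.sum_congr rfl
  intro j hj
  rw [Finset.mem_filter] at hj
  rw [h j hj.2]

/-- Structure of points of `nakP d m k` for `1 ≤ k ≤ d`. -/
lemma nakP_struct (hd : 0 < d) : ∀ k, k ≤ d → ∀ x ∈ nakP d m k,
    (∀ j : Fin d, k ≤ (j : ℕ) → x j = 0) ∧ x ⟨0, hd⟩ = 1 ∧
    (∀ i : Fin d, 1 ≤ (i : ℕ) → (i : ℕ) < k → 0 ≤ x i ∧ x i ≤ nakPairing m (i : ℕ) x) := by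
  intro k
  induction k with
  | zero => intro _ x hx; exact absurd hx (by simp [nakP])
  | succ n IH =>
    match n with
    | 0 =>
      intro _ x hx
      simp only [nakP, Set.mem_singleton_iff] at hx
      subst hx
      refine ⟨fun j hj => by simp; omega, by simp, fun i hi1 hi2 => by omega⟩
    | n + 1 =>
      intro hk x hx
      simp only [nakP, Set.mem_setOf_eq] at hx
      obtain ⟨h1, h2, h3⟩ := hx
      have hIH := IH (by omega) _ h1
      have hagree : ∀ j : Fin d, (j : ℕ) ≠ n + 1 → coordZero x (n+1) j = x j := by
        intro j hj; simp [coordZero, hj]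
      have hnd : n + 1 < d := by omega
      have hcN : coordN x (n+1) = x ⟨n+1, hnd⟩ := by simp [coordN, hnd]
      refine ⟨?_, ?_, ?_⟩
      · intro j hj
        rw [← hagree j (by omega)]
        exact hIH.1 j (by omega)
      · rw [← hagree ⟨0, hd⟩ (by simp)]
        exact hIH.2.1
      · intro i hi1 hi2
        rcases Nat.lt_or_ge (i : ℕ) (n + 1) with hlt | hge
        · have hxi : x i = coordZero x (n+1) i := (hagree i (by omega)).symm
          have hpc : nakPairing m (i : ℕ) (coordZero x (n+1)) = nakPairing m (i:ℕ) x :=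
            pairing_congr (fun j hj => hagree j (by omega))
          have := hIH.2.2 i hi1 hlt
          rw [hxi, ← hpc]
          exact this
        · have : (i : ℕ) = n + 1 := by omega
          have hie : i = ⟨n+1, hnd⟩ := Fin.ext this
          rw [hie]
          rw [hcN] at h2 h3
          exact ⟨h2, by simpa using h3⟩

/-- `P^{(k)} ⊆ P^{(k+1)}` under admissibility. -/
lemma nakP_mono (hd : 0 < d) (hadm : NakAdmissibleR d m) {k : ℕ} (hk1 : 1 ≤ k)
    (hk2 : k + 1 ≤ d) {x : Fin d → ℝ} (hx : x ∈ nakP d m k) : x ∈ nakP d m (k + 1) := by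
  obtain ⟨n, rfl⟩ : ∃ n, k = n + 1 := ⟨k - 1, by omega⟩
  have hstr := nakP_struct hd (n+1) (by omega) x hx
  have hxz : x ⟨n+1, by omega⟩ = 0 := hstr.1 _ (le_refl _)
  have hcz : coordZero x (n+1) = x := by
    funext j
    by_cases hj : (j : ℕ) = n + 1
    · have : j = ⟨n+1, by omega⟩ := Fin.ext hj
      simp [coordZero, hj, this, hxz]
    · simp [coordZero, hj]
  have hcN : coordN x (n+1) = 0 := by
    simp [coordN, show n+1 < d by omega, hxz]
  show x ∈ nakP d m (n + 2)
  simp only [nakP, Set.mem_setOf_eq]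
  refine ⟨by rw [hcz]; exact hx, by rw [hcN], ?_⟩
  rw [hcN]
  have := hadm (n + 2) (by omega) (by omega) x (by simpa using hx)
  simpa using this

/-- extension of a point of `P^{(k)}` to `P^{(k+1)}` with last coordinate `pairing`. -/
lemma nakP_ext (hd : 0 < d) (hadm : NakAdmissibleR d m) {k : ℕ} (hk1 : 1 ≤ k)
    (hk2 : k + 1 ≤ d) {x : Fin d → ℝ} (hx : x ∈ nakP d m k) :
    (fun j : Fin d => if (j : ℕ) = k then nakPairing m k x else x j) ∈ nakP d m (k + 1) := by
  obtain ⟨n, rfl⟩ : ∃ n, k = n + 1 := ⟨k - 1, by omega⟩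
  set s := nakPairing m (n+1) x with hs
  set x' : Fin d → ℝ := fun j : Fin d => if (j : ℕ) = n+1 then s else x j with hx'
  have hstr := nakP_struct hd (n+1) (by omega) x hx
  have hxz : x ⟨n+1, by omega⟩ = 0 := hstr.1 _ (le_refl _)
  have hcz : coordZero x' (n+1) = x := by
    funext j
    by_cases hj : (j : ℕ) = n + 1
    · have : j = ⟨n+1, by omega⟩ := Fin.ext hj
      simp [coordZero, hj, this, hxz]
    · simp [coordZero, hx', hj]
  have hcN : coordN x' (n+1) = s := by
    simp [coordN, show n+1 < d by omega, hx']
  have hsnn : 0 ≤ s := hadm (n + 2) (by omega) (by omega) x (by simpa using hx)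
  have hpc : nakPairing m (n+1) x' = s := by
    rw [hs]
    apply pairing_congr
    intro j hj
    simp [hx', show (j:ℕ) ≠ n+1 by omega]
  show x' ∈ nakP d m (n + 2)
  simp only [nakP, Set.mem_setOf_eq]
  exact ⟨by rw [hcz]; exact hx, by rw [hcN]; exact hsnn, by rw [hcN, hpc]⟩

end struct

section pairing
variable {d : ℕ} {m : ℕ → ℕ → ℤ} {ε : ℕ → ℤ}

lemma genZ_congr {ε ε' : ℕ → ℤ} (i : Fin d) (h : ε (i : ℕ) = ε' (i : ℕ)) (j : Fin d) :
    nakGenZ d m ε i j = nakGenZ d m ε' i j := by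
  unfold nakGenZ; rw [h]

lemma rowPair_zero (hd : 0 < d) (ε : ℕ → ℤ) (i : Fin d) (hi : (i : ℕ) = 0) (x : Fin d → ℝ) :
    ∑ j : Fin d, (nakGenZ d m ε i j : ℝ) * x j = x ⟨0, hd⟩ := by
  have : ∀ j : Fin d, (nakGenZ d m ε i j : ℝ) * x j = if j = ⟨0, hd⟩ then x j else 0 := by
    intro j
    by_cases hj : j = ⟨0, hd⟩
    · subst hj; simp [nakGenZ, hi]
    · have : (j : ℕ) ≠ 0 := fun h => hj (Fin.ext (by simpa using h))
      simp [nakGenZ, hi, this, hj]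
  rw [Finset.sum_congr rfl (fun j _ => this j), Finset.sum_ite_eq' Finset.univ ⟨0, hd⟩ x]
  simp

lemma rowPair (hm : ∀ i j, i < j → m i j = 0) (ε : ℕ → ℤ) (i : Fin d) (hi : (i : ℕ) ≠ 0)
    (x : Fin d → ℝ) :
    ∑ j : Fin d, (nakGenZ d m ε i j : ℝ) * x j =
      (ε (i : ℕ) : ℝ) * x i + (1 - (ε (i : ℕ) : ℝ)) * (nakPairing m (i : ℕ) x - x i) := by
  have hterm : ∀ j : Fin d, (nakGenZ d m ε i j : ℝ) * x j =
      (ε (i : ℕ) : ℝ) * (if j = i then x j else 0) +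
      (1 - (ε (i : ℕ) : ℝ)) * ((m (i : ℕ) ((j : ℕ) + 1) : ℝ) * x j - (if j = i then x j else 0)) := by
    intro j
    by_cases hj : j = i <;> simp [nakGenZ, hi, hj] <;> push_cast <;> ring_nf
  rw [Finset.sum_congr rfl (fun j _ => hterm j), Finset.sum_add_distrib,
    ← Finset.mul_sum, ← Finset.mul_sum, Finset.sum_sub_distrib,
    Finset.sum_ite_eq' Finset.univ i x]
  have hS : ∑ j : Fin d, (m (i : ℕ) ((j : ℕ) + 1) : ℝ) * x j = nakPairing m (i : ℕ) x := by
    unfold nakPairing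
    symm
    apply (Finset.sum_filter_of_ne ?_)
    intro j _ hne
    by_contra h
    exact hne (by rw [hm (i : ℕ) ((j : ℕ) + 1) (by omega)]; simp)
  rw [hS]
  simp

/-- every generator row pairs nonnegatively with every point of `P^{(k)}` (`k ≤ d`). -/
lemma rowPair_nonneg (hd : 0 < d) (hm : ∀ i j, i < j → m i j = 0) (ε : ℕ → ℤ)
    (hε : ∀ i, ε i = 0 ∨ ε i = 1) {k : ℕ} (hk : k ≤ d) (i : Fin d)
    (x : Fin d → ℝ) (hx : x ∈ nakP d m k) (hik : (i : ℕ) < k ∨ (i : ℕ) = 0) :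
    0 ≤ ∑ j : Fin d, (nakGenZ d m ε i j : ℝ) * x j := by
  have hstr := nakP_struct hd k hk x hx
  by_cases hi : (i : ℕ) = 0
  · rw [rowPair_zero hd ε i hi x, hstr.2.1]; norm_num
  · rw [rowPair hm ε i hi x]
    have hik' : (i : ℕ) < k := by rcases hik with h | h; exact h; exact absurd h hi
    have hc := hstr.2.2 i (by omega) hik'
    rcases hε (i : ℕ) with h | h <;> simp [h]
    · linarith [hc.1, hc.2]
    · exact hc.1

end pairing

section surj
variable {d : ℕ} {m : ℕ → ℕ → ℤ}

lemma surj_lemma (hd : 0 < d) (hm : ∀ i j, i < j → m i j = 0) (hadm : NakAdmissibleR d m) :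
    ∀ k, 1 ≤ k → k ≤ d → ∀ y : Fin d → ℝ,
    (∀ j : Fin d, k ≤ (j : ℕ) → y j = 0) →
    (∀ x ∈ nakP d m k, 0 ≤ ∑ j : Fin d, y j * x j) →
    ∃ ε : ℕ → ℤ, (∀ i, ε i = 0 ∨ ε i = 1) ∧ ∃ a : Fin d → ℝ, (∀ i, 0 ≤ a i) ∧
      (∀ i : Fin d, k ≤ (i : ℕ) → a i = 0) ∧
      ∀ j : Fin d, y j = ∑ i : Fin d, a i * (nakGenZ d m ε i j : ℝ) := by
  intro k hk1
  induction k, hk1 using Nat.le_induction with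
  | base =>
    intro _ y hz hp
    have hpt : (fun j : Fin d => if (j : ℕ) = 0 then (1:ℝ) else 0) ∈ nakP d m 1 := by
      simp [nakP]
    have hy0 : 0 ≤ y ⟨0, hd⟩ := by
      have := hp _ hpt
      have he : ∑ j : Fin d, y j * (if (j : ℕ) = 0 then (1:ℝ) else 0) = y ⟨0, hd⟩ := by
        have : ∀ j : Fin d, y j * (if (j : ℕ) = 0 then (1:ℝ) else 0)
            = if j = ⟨0, hd⟩ then y j else 0 := by
          intro j
          by_cases hj : j = ⟨0, hd⟩
          · subst hj; simp
          · have : (j : ℕ) ≠ 0 := fun h => hj (Fin.ext (by simpa using h))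
            simp [this, hj]
        rw [Finset.sum_congr rfl (fun j _ => this j), Finset.sum_ite_eq' Finset.univ ⟨0, hd⟩ y]
        simp
      rwa [he] at this
    refine ⟨fun _ => 0, fun _ => Or.inl rfl,
      fun i => if i = ⟨0, hd⟩ then y ⟨0, hd⟩ else 0, ?_, ?_, ?_⟩
    · intro i
      show 0 ≤ if i = ⟨0, hd⟩ then y ⟨0, hd⟩ else 0
      split
      · exact hy0
      · exact le_refl 0
    · intro i hi
      have : i ≠ ⟨0, hd⟩ := by intro h; subst h; simp at hi
      simp [this]
    · intro j
      rw [Finset.sum_eq_single ⟨0, hd⟩]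
      · by_cases hj : j = ⟨0, hd⟩
        · subst hj; simp [nakGenZ]
        · have hjn : (j : ℕ) ≠ 0 := fun h => hj (Fin.ext (by simpa using h))
          simp [nakGenZ, hjn, hz j (by omega)]
      · intro i _ hi
        have : ¬ (i = ⟨0, hd⟩) := hi
        simp [this]
      · intro h; exact absurd (Finset.mem_univ _) h
  | succ k hk1 IH =>
    intro hkd y hz hp
    have hkdlt : k < d := by omega
    have hk0 : ((⟨k, hkdlt⟩ : Fin d) : ℕ) = k := rfl
    obtain ⟨εk, hεk01, habs, hsign⟩ :
        ∃ εk : ℤ, (εk = 0 ∨ εk = 1) ∧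
          y ⟨k, hkdlt⟩ = |y ⟨k, hkdlt⟩| * (2 * (εk : ℝ) - 1) ∧
          (εk = 1 ∨ (εk = 0 ∧ |y ⟨k, hkdlt⟩| = - y ⟨k, hkdlt⟩)) := by
      rcases le_or_gt 0 (y ⟨k, hkdlt⟩) with h | h
      · exact ⟨1, Or.inr rfl, by rw [abs_of_nonneg h]; push_cast; ring, Or.inl rfl⟩
      · exact ⟨0, Or.inl rfl, by rw [abs_of_neg h]; push_cast; ring,
          Or.inr ⟨rfl, by rw [abs_of_neg h]⟩⟩
    set ak : ℝ := |y ⟨k, hkdlt⟩| with hak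
    have haknn : 0 ≤ ak := abs_nonneg _
    set g : Fin d → ℝ := fun j => ((nakGenZ d m (fun _ => εk) ⟨k, hkdlt⟩ j : ℤ) : ℝ) with hg
    have hgkf : g ⟨k, hkdlt⟩ = 2 * (εk : ℝ) - 1 := by
      show ((nakGenZ d m (fun _ => εk) ⟨k, hkdlt⟩ ⟨k, hkdlt⟩ : ℤ) : ℝ) = _
      rw [genZ_diag _ hm, hk0, if_neg (by omega : ¬ k = 0)]
      push_cast; ring
    have hgz : ∀ j : Fin d, k < (j : ℕ) → g j = 0 := by
      intro j hj
      show ((nakGenZ d m (fun _ => εk) ⟨k, hkdlt⟩ j : ℤ) : ℝ) = 0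
      rw [genZ_lt hm _ ⟨k, hkdlt⟩ j (by rw [hk0]; exact hj)]
      simp
    set y' : Fin d → ℝ := fun j => y j - ak * g j with hy'
    have hy'j : ∀ j, y' j = y j - ak * g j := fun j => rfl
    have hy'kf : y' ⟨k, hkdlt⟩ = 0 := by
      rw [hy'j, hgkf, ← habs]; ring
    have hz' : ∀ j : Fin d, k ≤ (j : ℕ) → y' j = 0 := by
      intro j hj
      rcases Nat.lt_or_ge k (j : ℕ) with h | h
      · rw [hy'j, hz j (by omega), hgz j h]; ring
      · have hje : j = ⟨k, hkdlt⟩ := Fin.ext (by rw [hk0]; omega)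
        rw [hje]; exact hy'kf
    have hp' : ∀ x ∈ nakP d m k, 0 ≤ ∑ j : Fin d, y' j * x j := by
      intro x hx
      have hstr := nakP_struct hd k (by omega) x hx
      have hxkf : x ⟨k, hkdlt⟩ = 0 := hstr.1 ⟨k, hkdlt⟩ (le_of_eq hk0.symm)
      have hrp : ∑ j : Fin d, g j * x j = (1 - (εk : ℝ)) * nakPairing m k x := by
        have : ∑ j : Fin d, g j * x j
            = ∑ j : Fin d, ((nakGenZ d m (fun _ => εk) ⟨k, hkdlt⟩ j : ℤ) : ℝ) * x j := rfl
        rw [this, rowPair hm _ ⟨k, hkdlt⟩ (by rw [hk0]; omega) x, hk0, hxkf]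
        ring
      have hsplit : ∑ j : Fin d, y' j * x j =
          ∑ j : Fin d, y j * x j - ak * ((1 - (εk : ℝ)) * nakPairing m k x) := by
        rw [← hrp, Finset.mul_sum, ← Finset.sum_sub_distrib]
        apply Finset.sum_congr rfl
        intro j _
        rw [hy'j]; ring
      rw [hsplit]
      rcases hsign with h1 | ⟨h0, habs'⟩
      · rw [h1]
        simp only [Int.cast_one, sub_self, zero_mul, mul_zero, sub_zero]
        exact hp x (nakP_mono hd hadm hk1 hkd hx)
      · rw [h0, habs']
        simp only [Int.cast_zero, sub_zero, one_mul]
        set s := nakPairing m k x with hs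
        have hx' := nakP_ext hd hadm hk1 hkd hx
        have hkey : ∑ j : Fin d, y j * (fun j : Fin d => if (j : ℕ) = k then s else x j) j
            = ∑ j : Fin d, y j * x j + y ⟨k, hkdlt⟩ * s := by
          have hterm : ∀ j : Fin d, y j * (fun j : Fin d => if (j : ℕ) = k then s else x j) j
              = y j * x j + (if j = ⟨k, hkdlt⟩ then y ⟨k, hkdlt⟩ * s else 0) := by
            intro j
            by_cases hj : j = ⟨k, hkdlt⟩
            · subst hj
              simp [hk0, hxkf]
            · have hjn : (j : ℕ) ≠ k := fun hh => hj (Fin.ext (by rw [hk0]; exact hh))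
              simp [hjn, hj]
          rw [Finset.sum_congr rfl (fun j _ => hterm j), Finset.sum_add_distrib,
            Finset.sum_ite_eq' Finset.univ (⟨k, hkdlt⟩ : Fin d) (fun _ => y ⟨k, hkdlt⟩ * s)]
          simp
        have hge := hp _ hx'
        rw [hkey] at hge
        linarith
    obtain ⟨ε', hε', a', ha'nn, ha'z, hrep'⟩ := IH (by omega) y' hz' hp'
    refine ⟨fun i => if i = k then εk else ε' i, ?_, fun i => if i = ⟨k, hkdlt⟩ then ak else a' i,
      ?_, ?_, ?_⟩
    · intro i
      show (if i = k then εk else ε' i) = 0 ∨ (if i = k then εk else ε' i) = 1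
      split
      · exact hεk01
      · exact hε' i
    · intro i
      show 0 ≤ if i = ⟨k, hkdlt⟩ then ak else a' i
      split
      · exact haknn
      · exact ha'nn i
    · intro i hi
      show (if i = ⟨k, hkdlt⟩ then ak else a' i) = 0
      have h1 : ¬ (i = ⟨k, hkdlt⟩) := by
        intro h; subst h; rw [hk0] at hi; omega
      rw [if_neg h1]
      exact ha'z i (by omega)
    · intro j
      have hterm : ∀ i : Fin d,
          (if i = (⟨k, hkdlt⟩ : Fin d) then ak else a' i) *
            ((nakGenZ d m (fun i => if i = k then εk else ε' i) i j : ℤ) : ℝ)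
          = a' i * ((nakGenZ d m ε' i j : ℤ) : ℝ) + (if i = ⟨k, hkdlt⟩ then ak * g j else 0) := by
        intro i
        by_cases hik : i = ⟨k, hkdlt⟩
        · subst hik
          rw [if_pos rfl, if_pos rfl, ha'z ⟨k, hkdlt⟩ (le_of_eq hk0.symm)]
          have hrow : nakGenZ d m (fun i => if i = k then εk else ε' i) ⟨k, hkdlt⟩ j
              = nakGenZ d m (fun _ => εk) ⟨k, hkdlt⟩ j := by
            apply genZ_congr
            rw [hk0, if_pos rfl]
          rw [hrow, zero_mul, zero_add]
        · rw [if_neg hik, if_neg hik]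
          have hrow : nakGenZ d m (fun i => if i = k then εk else ε' i) i j
              = nakGenZ d m ε' i j := by
            apply genZ_congr
            have : (i : ℕ) ≠ k := fun hh => hik (Fin.ext hh)
            rw [if_neg this]
          rw [hrow, add_zero]
      rw [Finset.sum_congr rfl (fun i _ => hterm i), Finset.sum_add_distrib,
        Finset.sum_ite_eq' Finset.univ (⟨k, hkdlt⟩ : Fin d) (fun _ => ak * g j)]
      simp only [Finset.mem_univ, if_pos]
      rw [← hrep' j, hy'j]; ring

end surj

section parts
variable {d : ℕ} {m : ℕ → ℕ → ℤ}

lemma genZ_congr' {ε ε' : ℕ → ℤ} (i : Fin d) (h : ε (i : ℕ) = ε' (i : ℕ) ∨ (i : ℕ) = 0)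
    (j : Fin d) : nakGenZ d m ε i j = nakGenZ d m ε' i j := by
  rcases h with h | h
  · exact genZ_congr i h j
  · unfold nakGenZ; rw [if_pos h, if_pos h]

lemma union_part (hd : 0 < d) (hm : ∀ i j, i < j → m i j = 0) (hadm : NakAdmissibleR d m) :
    { y : Fin d → ℝ | ∃ ε : ℕ → ℤ, (∀ i, ε i = 0 ∨ ε i = 1) ∧ y ∈ nakCε d m ε } =
      { y : Fin d → ℝ | ∀ z ∈ nakConeTau d m, 0 ≤ ∑ j : Fin d, y j * z j } := by
  ext y
  simp only [Set.mem_setOf_eq]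
  constructor
  · rintro ⟨ε, hε, a, hann, hrep⟩ z ⟨r, x, hr, hx, rfl⟩
    have hzj : ∀ j : Fin d, (r • x) j = r * x j := fun j => rfl
    have hca : ∑ j : Fin d, y j * (r • x) j = r * ∑ i : Fin d,
        a i * ∑ j : Fin d, (nakGenZ d m ε i j : ℝ) * x j := by
      have h1 : ∀ j : Fin d, y j * (r • x) j
          = r * ∑ i : Fin d, a i * ((nakGenZ d m ε i j : ℝ) * x j) := by
        intro j
        rw [hzj j, hrep j, Finset.sum_mul, Finset.mul_sum]
        exact Finset.sum_congr rfl (fun i _ => by ring)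
      rw [Finset.sum_congr rfl (fun j _ => h1 j), ← Finset.mul_sum, Finset.sum_comm]
      congr 1
      exact Finset.sum_congr rfl (fun i _ => (Finset.mul_sum _ _ _).symm)
    rw [hca]
    apply mul_nonneg hr
    apply Finset.sum_nonneg
    intro i _
    exact mul_nonneg (hann i)
      (rowPair_nonneg hd hm ε hε (le_refl d) i x hx (Or.inl i.isLt))
  · intro hy
    obtain ⟨ε, hε, a, hann, _, hrep⟩ :=
      surj_lemma hd hm hadm d hd (le_refl d) y
        (fun j hj => absurd j.isLt (by omega))
        (fun x hx => hy x ⟨1, x, zero_le_one, hx, (one_smul ℝ x).symm⟩)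
    exact ⟨ε, hε, a, hann, hrep⟩

lemma inter_content (hm : ∀ i j, i < j → m i j = 0) {ε ε' : ℕ → ℤ}
    (hε : ∀ i, ε i = 0 ∨ ε i = 1) (hε' : ∀ i, ε' i = 0 ∨ ε' i = 1)
    {a b : Fin d → ℝ} (hann : ∀ i, 0 ≤ a i) (hbnn : ∀ i, 0 ≤ b i)
    (hab : ∀ j : Fin d, ∑ i : Fin d, a i * (nakGenZ d m ε i j : ℝ)
      = ∑ i : Fin d, b i * (nakGenZ d m ε' i j : ℝ)) :
    ∀ j : Fin d, 1 ≤ (j : ℕ) →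
      (ε (j : ℕ) = ε' (j : ℕ) → a j = b j) ∧
      (ε (j : ℕ) ≠ ε' (j : ℕ) → a j = 0 ∧ b j = 0) := by
  have core : ∀ j : Fin d, 1 ≤ (j : ℕ) →
      (∀ i : Fin d, (j : ℕ) < (i : ℕ) →
        (ε (i : ℕ) = ε' (i : ℕ) → a i = b i) ∧
        (ε (i : ℕ) ≠ ε' (i : ℕ) → a i = 0 ∧ b i = 0)) →
      (ε (j : ℕ) = ε' (j : ℕ) → a j = b j) ∧
      (ε (j : ℕ) ≠ ε' (j : ℕ) → a j = 0 ∧ b j = 0) := by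
    intro j hj1 ih
    have h0 : ∑ i : Fin d, (a i * (nakGenZ d m ε i j : ℝ)
        - b i * (nakGenZ d m ε' i j : ℝ)) = 0 := by
      rw [Finset.sum_sub_distrib, hab j, sub_self]
    rw [Finset.sum_eq_single j ?other ?nomem] at h0
    case other =>
      intro i _ hij
      rcases Nat.lt_trichotomy (i : ℕ) (j : ℕ) with h | h | h
      · rw [genZ_lt hm ε i j h, genZ_lt hm ε' i j h]; simp
      · exact absurd (Fin.ext h) hij
      · rcases eq_or_ne (ε (i : ℕ)) (ε' (i : ℕ)) with he | he
        · rw [(ih i h).1 he, genZ_congr i he j]; ring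
        · obtain ⟨h1, h2⟩ := (ih i h).2 he
          rw [h1, h2]; ring
    case nomem =>
      intro h; exact absurd (Finset.mem_univ _) h
    -- h0 : a j * G^ε j j - b j * G^{ε'} j j = 0
    have hj0 : ¬ ((j : ℕ) = 0) := by omega
    have hdε : (nakGenZ d m ε j j : ℝ) = 2 * (ε (j : ℕ) : ℝ) - 1 := by
      rw [genZ_diag ε hm, if_neg hj0]; push_cast; ring
    have hdε' : (nakGenZ d m ε' j j : ℝ) = 2 * (ε' (j : ℕ) : ℝ) - 1 := by
      rw [genZ_diag ε' hm, if_neg hj0]; push_cast; ring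
    rw [hdε, hdε'] at h0
    constructor
    · intro he
      rw [he] at h0
      rcases hε' (j : ℕ) with h | h <;> rw [h] at h0 <;> push_cast at h0 <;> linarith
    · intro he
      rcases hε (j : ℕ) with h | h <;> rcases hε' (j : ℕ) with h' | h' <;>
        first
          | (exact absurd (h.trans h'.symm) he)
          | (rw [h, h'] at h0; push_cast at h0;
             constructor <;> [linarith [hann j, hbnn j]; linarith [hann j, hbnn j]])
  have main : ∀ t : ℕ, ∀ j : Fin d, d ≤ t + (j : ℕ) + 1 → 1 ≤ (j : ℕ) →
      (ε (j : ℕ) = ε' (j : ℕ) → a j = b j) ∧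
      (ε (j : ℕ) ≠ ε' (j : ℕ) → a j = 0 ∧ b j = 0) := by
    intro t
    induction t with
    | zero =>
      intro j hj hj1
      exact core j hj1 (fun i hi => absurd i.isLt (by omega))
    | succ t IH =>
      intro j hj hj1
      exact core j hj1 (fun i hi => IH i (by omega) (by omega))
  intro j hj1
  exact main d j (by omega) hj1

lemma inter_part (hm : ∀ i j, i < j → m i j = 0) (ε ε' : ℕ → ℤ)
    (hε : ∀ i, ε i = 0 ∨ ε i = 1) (hε' : ∀ i, ε' i = 0 ∨ ε' i = 1) :
    nakCε d m ε ∩ nakCε d m ε' =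
      { y : Fin d → ℝ | ∃ a : Fin d → ℝ, (∀ i, 0 ≤ a i) ∧
          (∀ i : Fin d, 1 ≤ (i : ℕ) → ε (i : ℕ) ≠ ε' (i : ℕ) → a i = 0) ∧
          ∀ j : Fin d, y j = ∑ i : Fin d, a i * (nakGenZ d m ε i j : ℝ) } := by
  ext y
  simp only [Set.mem_inter_iff, Set.mem_setOf_eq]
  constructor
  · rintro ⟨⟨a, hann, hrep⟩, ⟨b, hbnn, hrep'⟩⟩
    have hab : ∀ j : Fin d, ∑ i : Fin d, a i * (nakGenZ d m ε i j : ℝ)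
        = ∑ i : Fin d, b i * (nakGenZ d m ε' i j : ℝ) := by
      intro j; rw [← hrep j, ← hrep' j]
    refine ⟨a, hann, ?_, hrep⟩
    intro i hi hne
    exact ((inter_content hm hε hε' hann hbnn hab i hi).2 hne).1
  · rintro ⟨a, hann, hzero, hrep⟩
    refine ⟨⟨a, hann, hrep⟩, ⟨a, hann, ?_⟩⟩
    intro j
    rw [hrep j]
    apply Finset.sum_congr rfl
    intro i _
    rcases Nat.eq_zero_or_pos (i : ℕ) with h0 | h0
    · rw [genZ_congr' i (Or.inr h0)]
    · rcases eq_or_ne (ε (i : ℕ)) (ε' (i : ℕ)) with he | he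
      · rw [genZ_congr' i (Or.inl he)]
      · rw [hzero i h0 he]; ring

end parts

theorem stmt15 (d : ℕ) (hd : 3 ≤ d) (m : ℕ → ℕ → ℤ)
    -- lower-triangularity: `m i j = 0` for `j > i` (1-based indices)
    (hm : ∀ i j, i < j → m i j = 0)
    (hadm : NakAdmissibleR d m) :
    -- each `C_ε` is basic w.r.t. `(ℤ^d)^∨`: its generators form a ℤ-basis (determinant ±1) …
    (∀ ε : ℕ → ℤ, (∀ i, ε i = 0 ∨ ε i = 1) →
      (Matrix.of (nakGenZ d m ε)).det = 1 ∨ (Matrix.of (nakGenZ d m ε)).det = -1) ∧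
    -- … the union of the cones `C_ε` is the dual cone `τ^∨` …
    { y : Fin d → ℝ | ∃ ε : ℕ → ℤ, (∀ i, ε i = 0 ∨ ε i = 1) ∧ y ∈ nakCε d m ε } =
      { y : Fin d → ℝ | ∀ z ∈ nakConeTau d m, 0 ≤ ∑ j : Fin d, y j * z j } ∧
    -- … and the intersection of two of them is the common face spanned by the
    -- generators with matching `ε`-entries
    (∀ ε ε' : ℕ → ℤ, (∀ i, ε i = 0 ∨ ε i = 1) → (∀ i, ε' i = 0 ∨ ε' i = 1) →
      nakCε d m ε ∩ nakCε d m ε' =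
        { y | ∃ a : Fin d → ℝ, (∀ i, 0 ≤ a i) ∧
            (∀ i : Fin d, 1 ≤ (i : ℕ) → ε (i : ℕ) ≠ ε' (i : ℕ) → a i = 0) ∧
            ∀ j : Fin d, y j = ∑ i : Fin d, a i * (nakGenZ d m ε i j : ℝ) }) := by
  have hd0 : 0 < d := by omega
  exact ⟨det_part d m hm, union_part hd0 hm hadm, fun ε ε' hε hε' => inter_part hm ε ε' hε hε'⟩
end

section
/- Let d ≥ 3 and m an admissible Nakajima parameter matrix, τ := pos(P_m^{(d)}). Then the set L := {e_1^∨} ∪ { e_k^∨, m_{k-1} - e_k^∨ : 2 ≤ k ≤ d } generates the additive semigroup τ^∨ ∩ (ℤ^d)^∨: every lattice point of the dual cone τ^∨ is a non-negative integer combination of the elements of L. -/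
/-- The list `L = {e₁^∨} ∪ {e_k^∨, m_{k-1} - e_k^∨ : 2 ≤ k ≤ d}` of `2d-1` vectors. -/
def LvecZ (d : ℕ) (m : ℕ → ℕ → ℤ) (i : Fin (2 * d - 1)) (j : Fin d) : ℤ :=
  if (i : ℕ) < d then (if (j : ℕ) = (i : ℕ) then 1 else 0)
  else m ((i : ℕ) - d + 1) ((j : ℕ) + 1) - (if (j : ℕ) = (i : ℕ) - d + 1 then 1 else 0)

lemma nakP_support (d : ℕ) (m : ℕ → ℕ → ℤ) :
    ∀ n (x : Fin d → ℝ), x ∈ nakP d m n → ∀ j : Fin d, n ≤ (j : ℕ) → x j = 0 := by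
  intro n
  induction n using Nat.strong_induction_on with
  | _ n ih =>
    match n with
    | 0 => intro x hx; exact absurd hx (Set.notMem_empty x)
    | 1 =>
      intro x hx j hj
      simp only [nakP, Set.mem_singleton_iff] at hx
      subst hx
      simp [show (j : ℕ) ≠ 0 by omega]
    | (i + 2) =>
      intro x hx j hj
      simp only [nakP, Set.mem_setOf_eq] at hx
      have h := ih (i + 1) (by omega) _ hx.1 j (by omega)
      simpa [coordZero, show (j : ℕ) ≠ i + 1 by omega] using h

lemma key16 (d : ℕ) (hd : 3 ≤ d) (m : ℕ → ℕ → ℤ)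
    (hm : ∀ i j, i < j → m i j = 0) (hadm : NakAdmissibleR d m) :
    ∀ n : ℕ, n + 1 ≤ d → ∀ y : Fin d → ℤ,
      (∀ j : Fin d, n + 1 ≤ (j : ℕ) → y j = 0) →
      (∀ x ∈ nakP d m (n + 1), 0 ≤ ∑ j : Fin d, (y j : ℝ) * x j) →
      ∃ a : Fin (2 * d - 1) → ℕ,
        ∀ j : Fin d, y j = ∑ i : Fin (2 * d - 1), (a i : ℤ) * LvecZ d m i j := by
  intro n
  induction n with
  | zero =>
    intro _ y hsupp hdual
    have hd0 : (0 : ℕ) < d := by omega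
    have he1 : (fun j : Fin d => if (j : ℕ) = 0 then (1 : ℝ) else 0) ∈ nakP d m 1 := by
      simp [nakP]
    have h0 := hdual _ he1
    have hsum : ∑ j : Fin d, (y j : ℝ) * (if (j : ℕ) = 0 then (1:ℝ) else 0)
        = (y ⟨0, hd0⟩ : ℝ) := by
      rw [Finset.sum_eq_single (⟨0, hd0⟩ : Fin d)]
      · simp
      · intro b _ hb
        have : (b : ℕ) ≠ 0 := fun h => hb (Fin.ext h)
        simp [this]
      · simp
    rw [hsum] at h0
    have hy0 : 0 ≤ y ⟨0, hd0⟩ := by exact_mod_cast h0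
    have hi0 : (0 : ℕ) < 2 * d - 1 := by omega
    refine ⟨fun i => if i = ⟨0, hi0⟩ then (y ⟨0, hd0⟩).toNat else 0, fun j => ?_⟩
    rw [Finset.sum_eq_single (⟨0, hi0⟩ : Fin (2 * d - 1))]
    · simp only [if_pos rfl, ite_true]
      rw [Int.toNat_of_nonneg hy0]
      have hLj : LvecZ d m ⟨0, hi0⟩ j = if (j : ℕ) = 0 then 1 else 0 := by
        simp [LvecZ, hd0]
      rw [hLj]
      by_cases hj : (j : ℕ) = 0
      · have : j = ⟨0, hd0⟩ := Fin.ext hj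
        subst this
        rw [if_pos hj, mul_one]
      · rw [hsupp j (by omega), if_neg hj, mul_zero]
    · intro b _ hb; simp [hb]
    · simp
  | succ n ih =>
    intro h2 y hsupp hdual
    have hn1d : n + 1 < d := by omega
    set jn : Fin d := ⟨n + 1, hn1d⟩ with hjn
    set c : ℤ := y jn with hc
    have hpair : ∀ x ∈ nakP d m (n + 1), 0 ≤ nakPairing m (n + 1) x := by
      intro x hx
      have h := hadm (n + 2) (by omega) (by omega) x (by exact hx)
      exact h
    rcases le_or_gt 0 c with hc0 | hc0
    · -- case y_{n+1} ≥ 0 : subtract c * e_{n+1}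
      set y' : Fin d → ℤ := fun j => if (j : ℕ) = n + 1 then 0 else y j with hy'
      have hsupp' : ∀ j : Fin d, n + 1 ≤ (j : ℕ) → y' j = 0 := by
        intro j hj
        by_cases h : (j : ℕ) = n + 1
        · simp [hy', h]
        · simp [hy', h, hsupp j (by omega)]
      have hdual' : ∀ x ∈ nakP d m (n + 1), 0 ≤ ∑ j : Fin d, (y' j : ℝ) * x j := by
        intro x hx
        have hxs := nakP_support d m (n + 1) x hx
        have hmem : x ∈ nakP d m (n + 2) := by
          simp only [nakP, Set.mem_setOf_eq]
          have hcz : coordZero x (n + 1) = x := by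
            funext j
            by_cases h : (j : ℕ) = n + 1
            · simp [coordZero, h, (hxs j (by omega)).symm]
            · simp [coordZero, h]
          have hcn : coordN x (n + 1) = 0 := by
            rw [coordN, dif_pos hn1d]
            exact hxs ⟨n + 1, hn1d⟩ le_rfl
          refine ⟨by rw [hcz]; exact hx, by rw [hcn], ?_⟩
          rw [hcn]; exact hpair x hx
        have h0 := hdual x hmem
        have heq : ∑ j : Fin d, (y' j : ℝ) * x j = ∑ j : Fin d, (y j : ℝ) * x j := by
          refine Finset.sum_congr rfl fun j _ => ?_
          by_cases h : (j : ℕ) = n + 1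
          · simp [hy', h, hxs j (by omega)]
          · simp [hy', h]
        rw [heq]; exact h0
      obtain ⟨a', ha'⟩ := ih (by omega) y' hsupp' hdual'
      have hi0 : n + 1 < 2 * d - 1 := by omega
      set i0 : Fin (2 * d - 1) := ⟨n + 1, hi0⟩ with hi0def
      refine ⟨fun i => a' i + if i = i0 then c.toNat else 0, fun j => ?_⟩
      have hsum : ∑ i : Fin (2 * d - 1),
          (((a' i + if i = i0 then c.toNat else 0 : ℕ)) : ℤ) * LvecZ d m i j
          = (∑ i : Fin (2 * d - 1), (a' i : ℤ) * LvecZ d m i j)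
            + (c.toNat : ℤ) * LvecZ d m i0 j := by
        push_cast
        simp only [add_mul, ite_mul, zero_mul]
        rw [Finset.sum_add_distrib, Finset.sum_ite_eq' Finset.univ i0]
        simp
      rw [hsum, ← ha' j, Int.toNat_of_nonneg hc0]
      have hL : LvecZ d m i0 j = if (j : ℕ) = n + 1 then 1 else 0 := by
        simp [LvecZ, hn1d, hi0def]
      rw [hL]
      by_cases h : (j : ℕ) = n + 1
      · have : j = jn := Fin.ext h
        subst this
        simp [hy', h, hc]
      · simp [hy', h]
    · -- case y_{n+1} < 0 : y' = y + c * (m_{n+1} - e_{n+1})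
      set w : Fin d → ℤ := fun j =>
        m (n + 1) ((j : ℕ) + 1) - (if (j : ℕ) = n + 1 then 1 else 0) with hw
      set y' : Fin d → ℤ := fun j => y j + c * w j with hy'
      have hsupp' : ∀ j : Fin d, n + 1 ≤ (j : ℕ) → y' j = 0 := by
        intro j hj
        rcases eq_or_lt_of_le hj with h | h
        · have hj' : (j : ℕ) = n + 1 := h.symm
          have : j = jn := Fin.ext hj'
          subst this
          simp [hy', hw, hj', hm (n + 1) (n + 2) (by omega), ← hc]
        · have h1 : y j = 0 := hsupp j (by omega)
          have h2 : m (n + 1) ((j : ℕ) + 1) = 0 := hm _ _ (by omega)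
          simp [hy', hw, h1, h2, show (j : ℕ) ≠ n + 1 by omega]
      have hdual' : ∀ x ∈ nakP d m (n + 1), 0 ≤ ∑ j : Fin d, (y' j : ℝ) * x j := by
        intro x hx
        have hxs := nakP_support d m (n + 1) x hx
        set t : ℝ := nakPairing m (n + 1) x with ht
        have ht0 : 0 ≤ t := hpair x hx
        set x'' : Fin d → ℝ := fun j => if (j : ℕ) = n + 1 then t else x j with hx''
        have hmem : x'' ∈ nakP d m (n + 2) := by
          simp only [nakP, Set.mem_setOf_eq]
          have hcz : coordZero x'' (n + 1) = x := by
            funext j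
            by_cases h : (j : ℕ) = n + 1
            · simp [coordZero, h, (hxs j (by omega)).symm]
            · simp [coordZero, hx'', h]
          have hcn : coordN x'' (n + 1) = t := by
            rw [coordN, dif_pos hn1d]
            simp [hx'']
          have hnp : nakPairing m (n + 1) x'' = t := by
            rw [ht, nakPairing, nakPairing]
            refine Finset.sum_congr rfl fun j hj => ?_
            simp only [Finset.mem_filter] at hj
            simp [hx'', show (j : ℕ) ≠ n + 1 by omega]
          exact ⟨by rw [hcz]; exact hx, by rw [hcn]; exact ht0, by rw [hcn, hnp]⟩
        have h0 := hdual x'' hmem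
        -- full sum of m row against x equals t
        have hmx : ∑ j : Fin d, ((m (n + 1) ((j : ℕ) + 1) : ℤ) : ℝ) * x j = t := by
          rw [ht, nakPairing]
          refine (Finset.sum_subset (Finset.filter_subset _ _) fun j _ hj => ?_).symm
          simp only [Finset.mem_filter, Finset.mem_univ, true_and, not_lt] at hj
          rw [hm (n + 1) ((j : ℕ) + 1) (by omega)]
          simp
        have hdx : ∑ j : Fin d, ((if (j : ℕ) = n + 1 then (1 : ℤ) else 0) : ℝ) * x j
            = 0 := by
          rw [Finset.sum_eq_single jn]
          · simp [hxs jn le_rfl]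
          · intro b _ hb
            have : (b : ℕ) ≠ n + 1 := fun h => hb (Fin.ext h)
            simp [this]
          · simp
        have heq1 : ∑ j : Fin d, (y' j : ℝ) * x j
            = (∑ j : Fin d, (y j : ℝ) * x j) + (c : ℝ) * t := by
          have step : ∀ j : Fin d, (y' j : ℝ) * x j
              = (y j : ℝ) * x j + (c : ℝ) *
                (((m (n + 1) ((j : ℕ) + 1) : ℤ) : ℝ) * x j
                  - ((if (j : ℕ) = n + 1 then (1 : ℤ) else 0) : ℝ) * x j) := by
            intro j
            simp only [hy', hw]
            push_cast
            ring
          rw [Finset.sum_congr rfl fun j _ => step j, Finset.sum_add_distrib,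
            ← Finset.mul_sum, Finset.sum_sub_distrib, hmx, hdx]
          ring
        have heq2 : ∑ j : Fin d, (y j : ℝ) * x'' j
            = (∑ j : Fin d, (y j : ℝ) * x j) + (c : ℝ) * t := by
          have step : ∀ j : Fin d, (y j : ℝ) * x'' j
              = (y j : ℝ) * x j + (if j = jn then (c : ℝ) * t else 0) := by
            intro j
            by_cases h : j = jn
            · subst h
              simp [hx'', hxs jn le_rfl, ← hc]
              simp [hjn]
            · have : (j : ℕ) ≠ n + 1 := fun hh => h (Fin.ext hh)
              simp [hx'', this, h]
          rw [Finset.sum_congr rfl fun j _ => step j, Finset.sum_add_distrib,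
            Finset.sum_ite_eq' Finset.univ jn]
          simp
        rw [heq1, ← heq2]
        exact h0
      obtain ⟨a', ha'⟩ := ih (by omega) y' hsupp' hdual'
      have hi1 : d + n < 2 * d - 1 := by omega
      set i1 : Fin (2 * d - 1) := ⟨d + n, hi1⟩ with hi1def
      have hL : ∀ j : Fin d, LvecZ d m i1 j = w j := by
        intro j
        have hv : (i1 : ℕ) = d + n := rfl
        have h1 : ¬ ((i1 : ℕ) < d) := by rw [hv]; omega
        have h2 : (i1 : ℕ) - d + 1 = n + 1 := by rw [hv]; omega
        rw [LvecZ, if_neg h1, h2, hw]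
      refine ⟨fun i => a' i + if i = i1 then (-c).toNat else 0, fun j => ?_⟩
      have hsum : ∑ i : Fin (2 * d - 1),
          (((a' i + if i = i1 then (-c).toNat else 0 : ℕ)) : ℤ) * LvecZ d m i j
          = (∑ i : Fin (2 * d - 1), (a' i : ℤ) * LvecZ d m i j)
            + ((-c).toNat : ℤ) * LvecZ d m i1 j := by
        push_cast
        simp only [add_mul, ite_mul, zero_mul]
        rw [Finset.sum_add_distrib, Finset.sum_ite_eq' Finset.univ i1]
        simp
      rw [hsum, ← ha' j, Int.toNat_of_nonneg (by omega : (0:ℤ) ≤ -c), hL j]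
      simp only [hy']
      ring

theorem stmt16 (d : ℕ) (hd : 3 ≤ d) (m : ℕ → ℕ → ℤ)
    -- lower-triangularity: `m i j = 0` for `j > i` (1-based indices)
    (hm : ∀ i j, i < j → m i j = 0)
    (hadm : NakAdmissibleR d m) :
    -- every lattice point of `τ^∨` is a non-negative integer combination of `L`
    ∀ y : Fin d → ℤ,
      (∀ z ∈ nakConeTau d m, 0 ≤ ∑ j : Fin d, (y j : ℝ) * z j) →
      ∃ a : Fin (2 * d - 1) → ℕ,
        ∀ j : Fin d, y j = ∑ i : Fin (2 * d - 1), (a i : ℤ) * LvecZ d m i j := by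
  intro y hy
  have hP : ∀ x ∈ nakP d m d, 0 ≤ ∑ j : Fin d, (y j : ℝ) * x j := by
    intro x hx
    exact hy x ⟨1, x, zero_le_one, hx, (one_smul ℝ x).symm⟩
  have hdd : d - 1 + 1 = d := by omega
  refine key16 d hd m hm hadm (d - 1) (by omega) y
    (fun j hj => absurd hj (by have := j.isLt; omega)) ?_
  rw [hdd]
  exact hP
end
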